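/- arXiv:math/0604575 — 5 statements merged into one kernel-verified Lean document; each statement's English description precedes it below -/
import Mathlib

section
/- Let G be a topological group that is Steinhaus, and let π : G → H be a group homomorphism into a separable topological group H. Then π is continuous. -/
open Pointwise in
/-- A topological group `G` is *Steinhaus with exponent `k`* if for every symmetric set
`W ⊆ G` (`W = W⁻¹`) which is countably syndetic (`G` is covered by countably many left
translates of `W`), the set `W ^ k` contains an open neighbourhood of the identity. -/
def IsSteinhausWith (G : Type*) [Group G] [TopologicalSpace G] (k : ℕ) : Prop :=
  ∀ W : Set G, W = W⁻¹ → (∃ g : ℕ → G, (⋃ n : ℕ, g n • W) = Set.univ) →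
    ∃ U : Set G, IsOpen U ∧ (1 : G) ∈ U ∧ U ⊆ W ^ k

/-- A topological group is *Steinhaus* if it is Steinhaus with some exponent `k ≥ 1`. -/
def IsSteinhaus (G : Type*) [Group G] [TopologicalSpace G] : Prop :=
  ∃ k : ℕ, 1 ≤ k ∧ IsSteinhausWith G k

open Pointwise Set

/-- For every `n` and every neighbourhood `V` of `1`, there is an open symmetric
neighbourhood `U` of `1` with `U ^ n ⊆ V`. -/
theorem exists_symm_nhds_pow_subset {H : Type*} [Group H] [TopologicalSpace H]
    [IsTopologicalGroup H] (n : ℕ) {V : Set H} (hV : V ∈ nhds (1 : H)) :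
    ∃ U : Set H, IsOpen U ∧ (1 : H) ∈ U ∧ U = U⁻¹ ∧ U ^ n ⊆ V := by
  induction n generalizing V with
  | zero =>
    refine ⟨Set.univ, isOpen_univ, trivial, by simp, ?_⟩
    simp only [pow_zero]
    exact Set.one_subset.mpr (mem_of_mem_nhds hV)
  | succ n ih =>
    obtain ⟨S, hSo, hS1, hSS⟩ := exists_open_nhds_one_mul_subset hV
    obtain ⟨U, hUo, hU1, hUsym, hUn⟩ := ih (hSo.mem_nhds hS1)
    refine ⟨U ∩ S ∩ S⁻¹, (hUo.inter hSo).inter hSo.inv, ⟨⟨hU1, hS1⟩, by simpa using hS1⟩,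
      ?_, ?_⟩
    · rw [Set.inter_inv, Set.inter_inv, ← hUsym, inv_inv]
      ext x; constructor
      · rintro ⟨⟨h1, h2⟩, h3⟩; exact ⟨⟨h1, h3⟩, h2⟩
      · rintro ⟨⟨h1, h2⟩, h3⟩; exact ⟨⟨h1, h3⟩, h2⟩
    · calc (U ∩ S ∩ S⁻¹) ^ (n + 1) = (U ∩ S ∩ S⁻¹) ^ n * (U ∩ S ∩ S⁻¹) := pow_succ _ _
        _ ⊆ U ^ n * S := Set.mul_subset_mul
            (Set.pow_subset_pow_left (fun x hx => hx.1.1)) (fun x hx => hx.1.2)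
        _ ⊆ S * S := Set.mul_subset_mul hUn subset_rfl
        _ ⊆ V := hSS

/-- The preimage of a pointwise power contains the pointwise power of the preimage. -/
theorem pow_preimage_subset {G H : Type*} [Group G] [Group H] (π : G →* H) (A : Set H)
    (k : ℕ) : (π ⁻¹' A) ^ k ⊆ π ⁻¹' (A ^ k) := by
  induction k with
  | zero => simp only [pow_zero]; intro x hx; simp_all [Set.mem_one]
  | succ n ih =>
    rw [pow_succ, pow_succ]
    rintro x ⟨a, ha, b, hb, rfl⟩
    exact ⟨π a, ih ha, π b, hb, (map_mul π a b).symm⟩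

/-- Any homomorphism from a Steinhaus topological group into a separable topological
group is continuous. -/
theorem continuous_of_isSteinhaus {G H : Type*}
    [Group G] [TopologicalSpace G] [IsTopologicalGroup G]
    [Group H] [TopologicalSpace H] [IsTopologicalGroup H]
    [TopologicalSpace.SeparableSpace H]
    (hG : IsSteinhaus G) (π : G →* H) : Continuous π := by
  obtain ⟨k, hk1, hk⟩ := hG
  apply continuous_of_continuousAt_one π
  rw [ContinuousAt, map_one, Filter.tendsto_def]
  intro V hV
  -- choose a symmetric open neighbourhood `U` of `1` with `U ^ (2k) ⊆ V`
  obtain ⟨U, hUo, hU1, hUsym, hUpow⟩ := exists_symm_nhds_pow_subset (2 * k) hV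
  set W : Set G := π ⁻¹' (U * U) with hW
  have hWsym : W = W⁻¹ := by
    ext x
    simp only [hW, Set.mem_preimage, Set.mem_inv, map_inv]
    have key : ∀ y : H, y ∈ U * U → y⁻¹ ∈ U * U := by
      rintro y ⟨a, ha, b, hb, rfl⟩
      exact ⟨b⁻¹, by rw [hUsym]; exact Set.inv_mem_inv.mpr hb,
        a⁻¹, by rw [hUsym]; exact Set.inv_mem_inv.mpr ha, (mul_inv_rev a b).symm⟩
    exact ⟨key _, fun h => by simpa using key _ h⟩
  -- countable syndeticity of `W`
  have : Nonempty H := ⟨1⟩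
  have hd := TopologicalSpace.denseRange_denseSeq H
  set d : ℕ → H := TopologicalSpace.denseSeq H
  have choice : ∀ n : ℕ, ∃ g : G, (∃ g' : G, π g' ∈ d n • U) → π g ∈ d n • U := by
    intro n
    by_cases h : ∃ g' : G, π g' ∈ d n • U
    · obtain ⟨g', hg'⟩ := h
      exact ⟨g', fun _ => hg'⟩
    · exact ⟨1, fun h' => absurd h' h⟩
  choose g hg using choice
  have hsynd : (⋃ n : ℕ, g n • W) = Set.univ := by
    refine Set.eq_univ_of_forall fun x => ?_
    have hne : ((π x) • U).Nonempty := Set.Nonempty.smul_set ⟨1, hU1⟩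
    have hop : IsOpen ((π x) • U) := hUo.smul _
    obtain ⟨n, hn⟩ : ∃ n, d n ∈ (π x) • U := hd.exists_mem_open hop hne
    obtain ⟨u, hu, hu'⟩ := hn
    simp only [smul_eq_mul] at hu'
    have hπx : π x ∈ d n • U := by
      rw [Set.mem_smul_set_iff_inv_smul_mem, smul_eq_mul, ← hu', mul_inv_rev,
        mul_assoc, inv_mul_cancel, mul_one]
      rw [hUsym]; exact Set.inv_mem_inv.mpr hu
    have hgn : π (g n) ∈ d n • U := hg n ⟨x, hπx⟩
    refine Set.mem_iUnion.mpr ⟨n, ?_⟩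
    rw [Set.mem_smul_set_iff_inv_smul_mem]
    show π ((g n)⁻¹ * x) ∈ U * U
    obtain ⟨v, hv, hv'⟩ := hgn
    obtain ⟨w, hw, hw'⟩ := hπx
    simp only [smul_eq_mul] at hv' hw'
    rw [map_mul, map_inv, ← hv', ← hw']
    refine ⟨v⁻¹, by rw [hUsym]; exact Set.inv_mem_inv.mpr hv, w, hw, ?_⟩
    rw [mul_inv_rev, mul_assoc, inv_mul_cancel_left]
  obtain ⟨O, hOo, hO1, hOW⟩ := hk W hWsym ⟨g, hsynd⟩
  refine Filter.mem_of_superset (hOo.mem_nhds hO1) (subset_trans hOW ?_)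
  have h1 : W ^ k ⊆ π ⁻¹' ((U * U) ^ k) := pow_preimage_subset π (U * U) k
  have h2 : (U * U) ^ k ⊆ V := by rw [← sq, ← pow_mul]; exact hUpow
  exact subset_trans h1 (Set.preimage_mono h2)
end

section
/- Let G and H be Polish groups (separable, completely metrizable topological groups). If G is Steinhaus and there exists a surjective group homomorphism from G onto H, then H is Steinhaus. -/
open Set Function Topology Filter Pointwise


section MeagreHelpers

variable {X : Type*} [TopologicalSpace X]

lemma isMeagre_of_isNowhereDense {s : Set X} (h : IsNowhereDense s) : IsMeagre s := by
  rw [isMeagre_iff_countable_union_isNowhereDense]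
  exact ⟨{s}, by simpa using h, countable_singleton _, by simp⟩

lemma isMeagre_sUnion' {S : Set (Set X)} (hc : S.Countable) (h : ∀ s ∈ S, IsMeagre s) :
    IsMeagre (⋃₀ S) := by
  rw [IsMeagre, compl_sUnion]
  exact (countable_sInter_mem (hc.image _)).2 (by
    rintro t ⟨u, hu, rfl⟩
    exact h u hu)

lemma isMeagre_iUnion' {ι : Type*} [Countable ι] {s : ι → Set X}
    (h : ∀ i, IsMeagre (s i)) : IsMeagre (⋃ i, s i) := by
  rw [IsMeagre, compl_iUnion]
  exact (countable_iInter_mem).2 h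

lemma not_isMeagre_of_isOpen' [BaireSpace X] {Q : Set X} (hQ : IsOpen Q) (hne : Q.Nonempty) :
    ¬ IsMeagre Q := by
  intro h
  have hd : Dense Qᶜ := dense_of_mem_residual h
  obtain ⟨x, hx⟩ := hne
  rcases hd.inter_open_nonempty Q hQ ⟨x, hx⟩ with ⟨y, hy1, hy2⟩
  exact hy2 hy1


end MeagreHelpers

section Localization

variable {X : Type*} [TopologicalSpace X]

/-- The set of points near which `B` is non-meager. -/
def locD (B : Set X) : Set X := {x | ∀ N : Set X, IsOpen N → x ∈ N → ¬ IsMeagre (B ∩ N)}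

lemma isClosed_locD (B : Set X) : IsClosed (locD B) := by
  rw [← isOpen_compl_iff, isOpen_iff_forall_mem_open]
  intro x hx
  simp only [locD, mem_compl_iff, mem_setOf_eq, not_forall] at hx
  obtain ⟨N, hNo, hxN, hNm⟩ := hx
  rw [not_not] at hNm
  refine ⟨N, fun y hy hyD => hyD N hNo hy hNm, hNo, hxN⟩

lemma locD_subset_closure (B : Set X) : locD B ⊆ closure B := by
  intro x hx
  rw [mem_closure_iff]
  intro N hNo hxN
  rcases (B ∩ N).eq_empty_or_nonempty with h | h
  · exact absurd (by rw [h]; exact IsMeagre.empty) (hx N hNo hxN)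
  · rwa [inter_comm] at h

lemma diff_locD_isMeagre [SecondCountableTopology X] (B : Set X) :
    IsMeagre (B \ locD B) := by
  set S : Set (Set X) := {b ∈ TopologicalSpace.countableBasis X | IsMeagre (B ∩ b)} with hS
  have hsub : B \ locD B ⊆ ⋃₀ ((fun b => B ∩ b) '' S) := by
    intro x hx
    obtain ⟨hxB, hxD⟩ := hx
    simp only [locD, mem_setOf_eq, not_forall] at hxD
    obtain ⟨N, hNo, hxN, hNm⟩ := hxD
    rw [not_not] at hNm
    obtain ⟨b, hb, hxb, hbN⟩ := (TopologicalSpace.isBasis_countableBasis X).exists_subset_of_mem_open hxN hNo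
    refine ⟨B ∩ b, ⟨b, ⟨hb, hNm.mono (inter_subset_inter_right _ hbN)⟩, rfl⟩, hxB, hxb⟩
  refine (isMeagre_sUnion' ?_ ?_).mono hsub
  · exact ((TopologicalSpace.countable_countableBasis X).mono (sep_subset _ _)).image _
  · rintro t ⟨b, ⟨_, hbm⟩, rfl⟩
    exact hbm

/-- Localization: a non-meager set of the form (closed ∩ countable intersection of opens)
is comeager in some nonempty open set. -/
lemma loc_lemma {F : Set X} (hF : IsClosed F) {O : ℕ → Set X} (hO : ∀ n, IsOpen (O n))
    (hnm : ¬ IsMeagre (F ∩ ⋂ n, O n)) :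
    ∃ Q : Set X, IsOpen Q ∧ Q.Nonempty ∧ IsMeagre (Q \ (F ∩ ⋂ n, O n)) := by
  set T : Set X := F ∩ ⋂ n, O n with hT
  set Q : Set X := interior (closure T) with hQdef
  have hQo : IsOpen Q := isOpen_interior
  have hQcl : Q ⊆ closure T := interior_subset
  have hne : Q.Nonempty := by
    rcases Q.eq_empty_or_nonempty with h | h
    · exact absurd (isMeagre_of_isNowhereDense h) hnm
    · exact h
  refine ⟨Q, hQo, hne, ?_⟩
  have hQF : Q \ F = ∅ := by
    have : closure T ⊆ F := by
      rw [← hF.closure_eq]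
      exact closure_mono inter_subset_left
    rw [diff_eq_empty]
    exact hQcl.trans this
  have hn : ∀ n, IsNowhereDense (Q \ O n) := by
    intro n
    rw [IsNowhereDense]
    by_contra h
    obtain ⟨x, hx⟩ := nonempty_iff_ne_empty.2 h
    set P : Set X := interior (closure (Q \ O n)) with hP
    have hPo : IsOpen P := isOpen_interior
    have hPQ : P ⊆ closure T := by
      have h2 : closure (Q \ O n) ⊆ closure T :=
        closure_minimal (diff_subset.trans hQcl) isClosed_closure
      exact interior_subset.trans h2
    -- P is nonempty open inside closure T, hence meets T
    have hPT : (P ∩ T).Nonempty := by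
      have hx' : x ∈ closure T := hPQ hx
      rw [mem_closure_iff] at hx'
      rcases hx' P hPo hx with ⟨y, hy⟩
      exact ⟨y, hy⟩
    obtain ⟨y, hyP, hyT⟩ := hPT
    have hyO : y ∈ O n := by
      have := hyT.2
      exact mem_iInter.1 this n
    -- R := P ∩ O n  is nonempty open, inside closure (Q \ O n): contradiction
    have hR : (P ∩ O n) ∩ (Q \ O n) ≠ ∅ := by
      have hy' : y ∈ closure (Q \ O n) := interior_subset hyP
      rw [mem_closure_iff] at hy'
      rcases hy' (P ∩ O n) (hPo.inter (hO n)) ⟨hyP, hyO⟩ with ⟨z, hz⟩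
      exact nonempty_iff_ne_empty.1 ⟨z, hz⟩
    apply hR
    ext z
    simp only [mem_inter_iff, mem_diff, mem_empty_iff_false, iff_false]
    rintro ⟨⟨_, hz2⟩, _, hz4⟩
    exact hz4 hz2
  have : Q \ T ⊆ (Q \ F) ∪ ⋃ n, (Q \ O n) := by
    intro z hz
    rcases hz with ⟨hzQ, hzT⟩
    by_cases hzF : z ∈ F
    · right
      simp only [mem_iUnion, mem_diff]
      by_contra hc
      push_neg at hc
      exact hzT ⟨hzF, mem_iInter.2 fun n => hc n hzQ⟩
    · exact Or.inl ⟨hzQ, hzF⟩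
  refine (IsMeagre.mono this ?_)
  rw [hQF, empty_union]
  exact isMeagre_iUnion' fun n => isMeagre_of_isNowhereDense (hn n)

end Localization

lemma isMeagre_union {X' : Type*} [TopologicalSpace X'] {s t : Set X'}
    (hs : IsMeagre s) (ht : IsMeagre t) : IsMeagre (s ∪ t) := by
  rw [IsMeagre, Set.compl_union]
  exact Filter.inter_mem hs ht

lemma not_isMeagre_univ {X' : Type*} [TopologicalSpace X'] [BaireSpace X'] [Nonempty X'] :
    ¬ IsMeagre (Set.univ : Set X') := by
  intro h
  rw [IsMeagre, Set.compl_univ] at h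
  have := dense_of_mem_residual h
  rcases this.inter_open_nonempty Set.univ isOpen_univ (by simp) with ⟨y, _, hy⟩
  exact hy

section Analytic

/-- The cylinder of a finite sequence. -/
def cylSet (s : List ℕ) : Set (ℕ → ℕ) := {z | ∀ i : ℕ, ∀ h : i < s.length, z i = s[i]}

lemma cylSet_nil : cylSet [] = univ := by
  ext z; simp [cylSet]

lemma cylSet_eq_iUnion (s : List ℕ) : cylSet s = ⋃ n : ℕ, cylSet (s ++ [n]) := by
  ext z
  simp only [mem_iUnion]
  constructor
  · intro hz
    refine ⟨z s.length, fun i h => ?_⟩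
    rcases lt_or_eq_of_le (Nat.lt_succ_iff.1 (by simpa using h)) with h' | h'
    · rw [List.getElem_append_left h']
      exact hz i h'
    · subst h'
      simp
  · rintro ⟨n, hn⟩ i h
    have := hn i (by simp; omega)
    rwa [List.getElem_append_left h] at this

variable {X : Type*} [MetricSpace X] [SecondCountableTopology X] [BaireSpace X]

theorem analytic_almost_open {f : (ℕ → ℕ) → X} (hf : Continuous f)
    (hnm : ¬ IsMeagre (range f)) :
    ∃ Q : Set X, IsOpen Q ∧ Q.Nonempty ∧ IsMeagre (Q \ range f) := by
  classical
  set A : List ℕ → Set X := fun s => f '' cylSet s with hA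
  set D : List ℕ → Set X := fun s => locD (A s) with hD
  set M : List ℕ → Set X := fun s => D s \ ⋃ n : ℕ, D (s ++ [n]) with hM
  -- Claim 1 : each M s is meagre
  have claim1 : ∀ s : List ℕ, IsMeagre (M s) := by
    intro s
    by_contra hMs
    set O : ℕ → Set X := fun n => (D (s ++ [n]))ᶜ with hO
    have hOopen : ∀ n, IsOpen (O n) := fun n => (isClosed_locD _).isOpen_compl
    have hMeq : M s = D s ∩ ⋂ n, O n := by
      rw [hM]
      simp only [diff_eq, compl_iUnion, hO]
    have h1 : ∀ n, IsMeagre (A (s ++ [n]) ∩ O n) := by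
      intro n
      have : A (s ++ [n]) ∩ O n = A (s ++ [n]) \ D (s ++ [n]) := by
        rw [diff_eq]
      rw [this]
      exact diff_locD_isMeagre _
    have h2 : IsMeagre (A s ∩ ⋂ n, O n) := by
      have hAs : A s = ⋃ n : ℕ, A (s ++ [n]) := by
        rw [hA]
        simp only
        rw [cylSet_eq_iUnion s, image_iUnion]
      have hsub : A s ∩ ⋂ n, O n ⊆ ⋃ n, A (s ++ [n]) ∩ O n := by
        intro x hx
        rw [hAs] at hx
        obtain ⟨hx1, hx2⟩ := hx
        rcases mem_iUnion.1 hx1 with ⟨n, hn⟩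
        exact mem_iUnion.2 ⟨n, hn, mem_iInter.1 hx2 n⟩
      exact (isMeagre_iUnion' h1).mono hsub
    rw [hMeq] at hMs
    obtain ⟨Q, hQo, hQne, hQm⟩ := loc_lemma (isClosed_locD _) hOopen hMs
    -- pick a point of (D s ∩ ⋂ O) ∩ Q
    have hpt : ((D s ∩ ⋂ n, O n) ∩ Q).Nonempty := by
      by_contra hc
      rw [not_nonempty_iff_eq_empty] at hc
      have : Q ⊆ Q \ (D s ∩ ⋂ n, O n) := by
        intro q hq
        refine ⟨hq, fun hq2 => ?_⟩
        have hmm : q ∈ (D s ∩ ⋂ n, O n) ∩ Q := ⟨hq2, hq⟩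
        rw [hc] at hmm
        exact hmm
      exact not_isMeagre_of_isOpen hQo hQne (hQm.mono this)
    obtain ⟨x, ⟨hxD, hxO⟩, hxQ⟩ := hpt
    -- x ∈ D s and Q is an open neighbourhood, so A s ∩ Q is non-meager
    apply hxD Q hQo hxQ
    -- but A s ∩ Q is meagre
    have hsub : A s ∩ Q ⊆ (A s ∩ ⋂ n, O n) ∪ (Q \ (D s ∩ ⋂ n, O n)) := by
      intro z hz
      by_cases hzO : z ∈ ⋂ n, O n
      · exact Or.inl ⟨hz.1, hzO⟩
      · exact Or.inr ⟨hz.2, fun hc => hzO hc.2⟩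
    exact (isMeagre_union h2 hQm).mono hsub
  -- Claim 2 : points of D [] avoiding all M s are in range f
  have claim2 : ∀ y : X, y ∈ D [] → (∀ s : List ℕ, y ∉ M s) → y ∈ range f := by
    intro y hy0 hyM
    -- build the branch
    have step : ∀ s : List ℕ, y ∈ D s → ∃ n : ℕ, y ∈ D (s ++ [n]) := by
      intro s hs
      have := hyM s
      rw [hM] at this
      simp only [mem_diff, not_and, not_not] at this
      exact mem_iUnion.1 (this hs)
    set nxt : List ℕ → ℕ := fun s => if h : ∃ n : ℕ, y ∈ D (s ++ [n]) then h.choose else 0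
      with hnxt
    set seq : ℕ → List ℕ := fun n => Nat.rec [] (fun _ s => s ++ [nxt s]) n with hseq
    have hseq_succ : ∀ n, seq (n + 1) = seq n ++ [nxt (seq n)] := fun n => rfl
    have hlen : ∀ n, (seq n).length = n := by
      intro n
      induction n with
      | zero => rfl
      | succ n ih => rw [hseq_succ, List.length_append, ih]; simp
    have hmem : ∀ n, y ∈ D (seq n) := by
      intro n
      induction n with
      | zero => exact hy0
      | succ n ih =>
        rw [hseq_succ]
        have hex : ∃ m : ℕ, y ∈ D (seq n ++ [m]) := step _ ih
        have : nxt (seq n) = hex.choose := by rw [hnxt]; simp [hex]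
        rw [this]
        exact hex.choose_spec
    set x : ℕ → ℕ := fun i => nxt (seq i) with hx
    have hget : ∀ n i (h : i < n), ∀ (h2 : i < (seq n).length), (seq n)[i] = x i := by
      intro n
      induction n with
      | zero => omega
      | succ n ih =>
        intro i h h2
        rw [List.getElem_of_eq (hseq_succ n) h2]
        rcases lt_or_eq_of_le (Nat.lt_succ_iff.1 h) with h' | h'
        · have hi2 : i < (seq n).length := by rw [hlen]; exact h'
          rw [List.getElem_append_left hi2]
          exact ih i h' hi2
        · have hle : (seq n).length ≤ i := by rw [hlen, h']
          rw [List.getElem_append_right hle]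
          have h0 : i - (seq n).length = 0 := by rw [hlen]; omega
          simp only [h0, List.getElem_cons_zero]
          show nxt (seq n) = nxt (seq i)
          rw [h']
    -- choose approximating points
    have happrox : ∀ n : ℕ, ∃ z : ℕ → ℕ, z ∈ cylSet (seq n) ∧ dist y (f z) < 1 / (n + 1) := by
      intro n
      have hyc : y ∈ closure (A (seq n)) := locD_subset_closure _ (hmem n)
      rw [Metric.mem_closure_iff] at hyc
      obtain ⟨b, hb, hbd⟩ := hyc (1 / (n + 1)) (by positivity)
      obtain ⟨z, hz, rfl⟩ := hb
      exact ⟨z, hz, hbd⟩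
    choose z hz hzd using happrox
    have hzx : Filter.Tendsto z Filter.atTop (nhds x) := by
      rw [tendsto_pi_nhds]
      intro i
      have hev : ∀ n, i < n → z n i = x i := by
        intro n hn
        have hl : i < (seq n).length := by rw [hlen]; exact hn
        rw [hz n i hl]
        exact hget n i hn hl
      exact Filter.Tendsto.congr' (by
        filter_upwards [Filter.eventually_gt_atTop i] with n hn
        exact (hev n hn).symm) tendsto_const_nhds
    have h1 : Filter.Tendsto (fun n => f (z n)) Filter.atTop (nhds (f x)) :=
      (hf.tendsto x).comp hzx
    have h2 : Filter.Tendsto (fun n => f (z n)) Filter.atTop (nhds y) := by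
      rw [tendsto_iff_dist_tendsto_zero]
      refine squeeze_zero (g := fun n : ℕ => 1 / ((n : ℝ) + 1)) (fun n => dist_nonneg)
        (fun n => le_of_lt (by rw [dist_comm]; exact hzd n))
        tendsto_one_div_add_atTop_nhds_zero_nat
    exact ⟨x, tendsto_nhds_unique h1 h2⟩
  -- Conclusion
  have hAnil : A [] = range f := by rw [hA]; simp [cylSet_nil, image_univ]
  have hDnm : ¬ IsMeagre (D []) := by
    intro h
    apply hnm
    have hsub2 : range f ⊆ D [] ∪ (A [] \ D []) := by
      intro w hw
      by_cases hwD : w ∈ D []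
      · exact Or.inl hwD
      · exact Or.inr ⟨by rw [hAnil]; exact hw, hwD⟩
    exact (isMeagre_union h (diff_locD_isMeagre _)).mono hsub2
  have hint : (interior (D [])).Nonempty := by
    rcases (interior (D [])).eq_empty_or_nonempty with h | h
    · exfalso
      apply hDnm
      apply isMeagre_of_isNowhereDense
      show interior (closure (D [])) = ∅
      rw [(isClosed_locD _).closure_eq]
      exact h
    · exact h
  refine ⟨interior (D []), isOpen_interior, hint, ?_⟩
  have hsub : interior (D []) \ range f ⊆ ⋃ s : List ℕ, M s := by
    intro w hw
    by_contra hc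
    rw [mem_iUnion] at hc
    push_neg at hc
    exact hw.2 (claim2 w (interior_subset hw.1) hc)
  exact (isMeagre_iUnion' fun s => claim1 s).mono hsub

end Analytic

section GroupLemmas

variable {H : Type*} [Group H] [TopologicalSpace H] [IsTopologicalGroup H]

/-- A set with countably many left translates covering the group is non-meager. -/
lemma not_isMeagre_of_syndetic [BaireSpace H] {A : Set H} (g : ℕ → H)
    (hcov : (⋃ n : ℕ, g n • A) = univ) : ¬ IsMeagre A := by
  intro hA
  apply not_isMeagre_univ (X' := H)
  rw [← hcov]
  refine isMeagre_iUnion' fun n => ?_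
  have : g n • A = (fun x => (g n)⁻¹ * x) ⁻¹' A := by
    ext x
    simp [mem_smul_set_iff_inv_smul_mem]
  rw [this]
  exact hA.preimage_of_isOpenMap (continuous_const.mul continuous_id)
    (Homeomorph.mulLeft ((g n)⁻¹)).isOpenMap

/-- Pettis-type lemma: if `A` is comeager in a nonempty open set `Q`,
then `A⁻¹ * A` is a neighbourhood of `1`. -/
lemma pettis_lemma [BaireSpace H] {A Q : Set H} (hQ : IsOpen Q) (hQne : Q.Nonempty)
    (hm : IsMeagre (Q \ A)) : ∃ O : Set H, IsOpen O ∧ (1 : H) ∈ O ∧ O ⊆ A⁻¹ * A := by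
  obtain ⟨q₀, hq₀⟩ := hQne
  refine ⟨(fun h => q₀ * h) ⁻¹' Q, hQ.preimage (continuous_const.mul continuous_id), by
    simpa using hq₀, ?_⟩
  intro h hh
  simp only [mem_preimage] at hh
  set Q' : Set H := Q ∩ (fun x => x * h) ⁻¹' Q with hQ'
  have hQ'o : IsOpen Q' := hQ.inter (hQ.preimage (continuous_id.mul continuous_const))
  have hQ'ne : Q'.Nonempty := ⟨q₀, hq₀, by simpa using hh⟩
  have hm2 : IsMeagre (Q' \ (fun x => x * h) ⁻¹' A) := by
    have hsub : Q' \ (fun x => x * h) ⁻¹' A ⊆ (fun x => x * h) ⁻¹' (Q \ A) := by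
      rintro x ⟨⟨_, hx2⟩, hx3⟩
      exact ⟨hx2, hx3⟩
    exact (hm.preimage_of_isOpenMap (continuous_id.mul continuous_const)
      (Homeomorph.mulRight h).isOpenMap).mono hsub
  have hm1 : IsMeagre (Q' \ A) := IsMeagre.mono (s := Q \ A) (t := Q' \ A) (fun x hx => ⟨hx.1.1, hx.2⟩) hm
  have hex : (Q' ∩ (A ∩ (fun x => x * h) ⁻¹' A)).Nonempty := by
    by_contra hc
    rw [not_nonempty_iff_eq_empty] at hc
    apply not_isMeagre_of_isOpen hQ'o hQ'ne
    refine (isMeagre_union hm1 hm2).mono fun x hx => ?_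
    by_cases hxA : x ∈ A
    · right
      refine ⟨hx, fun hxh => ?_⟩
      have : x ∈ Q' ∩ (A ∩ (fun x => x * h) ⁻¹' A) := ⟨hx, hxA, hxh⟩
      rw [hc] at this
      exact this
    · exact Or.inl ⟨hx, hxA⟩
  obtain ⟨x, _, hxA, hxhA⟩ := hex
  exact ⟨x⁻¹, inv_mem_inv.2 hxA, x * h, hxhA, by group⟩

end GroupLemmas

section OpenMapping

variable {G : Type*} [Group G] [TopologicalSpace G] [IsTopologicalGroup G] [PolishSpace G]
variable {H : Type*} [Group H] [TopologicalSpace H] [IsTopologicalGroup H] [PolishSpace H]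

/-- Any neighbourhood of `1` has countably many left translates covering the whole
(separable) group. -/
lemma exists_translates_cover {K : Type*} [Group K] [TopologicalSpace K] [IsTopologicalGroup K]
    [TopologicalSpace.SeparableSpace K] {V : Set K} (hV : V ∈ 𝓝 (1 : K)) :
    ∃ g : ℕ → K, (⋃ n : ℕ, g n • V) = univ := by
  obtain ⟨u, hu⟩ := TopologicalSpace.exists_dense_seq K
  refine ⟨u, eq_univ_iff_forall.2 fun x => ?_⟩
  have hop : IsOpen {y : K | y⁻¹ * x ∈ interior V} :=
    (isOpen_interior.preimage ((continuous_inv.mul continuous_const)))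
  have hne : x ∈ {y : K | y⁻¹ * x ∈ interior V} := by
    simp only [mem_setOf_eq, inv_mul_cancel]
    exact mem_interior_iff_mem_nhds.2 hV
  rcases hu.exists_mem_open hop ⟨x, hne⟩ with ⟨n, hn⟩
  exact mem_iUnion.2 ⟨n, mem_smul_set_iff_inv_smul_mem.2 (interior_subset hn)⟩

/-- Open mapping: a continuous surjective homomorphism between Polish groups maps
neighbourhoods of `1` to neighbourhoods of `1`. -/
lemma image_mem_nhds_one (π : G →* H) (hc : Continuous π) (hs : Function.Surjective π)
    {U : Set G} (hU : U ∈ 𝓝 (1 : G)) : π '' U ∈ 𝓝 (1 : H) := by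
  obtain ⟨V, hV, hVcl, hVsymm, hVU⟩ := exists_closed_nhds_one_inv_eq_mul_subset hU
  letI := TopologicalSpace.upgradeIsCompletelyMetrizable H
  set A : Set H := π '' V with hA
  -- A is non-meager
  have hAnm : ¬ IsMeagre A := by
    obtain ⟨g, hg⟩ := exists_translates_cover (K := G) hV
    refine not_isMeagre_of_syndetic (fun n => π (g n)) ?_
    rw [eq_univ_iff_forall]
    intro h
    obtain ⟨x, rfl⟩ := hs h
    have hx : x ∈ ⋃ n : ℕ, g n • V := by rw [hg]; trivial
    rcases mem_iUnion.1 hx with ⟨n, hn⟩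
    rw [mem_smul_set_iff_inv_smul_mem] at hn
    refine mem_iUnion.2 ⟨n, ?_⟩
    rw [mem_smul_set_iff_inv_smul_mem, smul_eq_mul, ← map_inv, ← map_mul]
    exact ⟨(g n)⁻¹ * x, hn, rfl⟩
  -- A is analytic : a continuous image of ℕ → ℕ
  haveI : PolishSpace V := hVcl.polishSpace
  haveI : Nonempty V := ⟨⟨1, mem_of_mem_nhds hV⟩⟩
  obtain ⟨f₀, hf₀c, hf₀s⟩ := PolishSpace.exists_nat_nat_continuous_surjective V
  set f : (ℕ → ℕ) → H := fun z => π ((f₀ z : V) : G) with hf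
  have hfc : Continuous f := hc.comp (continuous_subtype_val.comp hf₀c)
  have hfr : range f = A := by
    have : range f = π '' (Subtype.val '' (range f₀)) := by
      rw [hf]
      ext w
      simp only [mem_range, mem_image]
      constructor
      · rintro ⟨z, rfl⟩
        exact ⟨(f₀ z : G), ⟨f₀ z, ⟨z, rfl⟩, rfl⟩, rfl⟩
      · rintro ⟨v, ⟨v', ⟨z, rfl⟩, rfl⟩, rfl⟩
        exact ⟨z, rfl⟩
    rw [this, hf₀s.range_eq, image_univ, Subtype.range_coe, hA]
  have hAnm' : ¬ IsMeagre (range f) := by rwa [hfr]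
  obtain ⟨Q, hQo, hQne, hQm⟩ := analytic_almost_open hfc hAnm'
  rw [hfr] at hQm
  obtain ⟨O, hOo, hO1, hOsub⟩ := pettis_lemma hQo hQne hQm
  have hend : A⁻¹ * A ⊆ π '' U := by
    have h1 : A⁻¹ = π '' V⁻¹ := by
      rw [hA]
      ext x
      constructor
      · intro hx
        obtain ⟨v, hv, hvx⟩ := Set.mem_inv.1 hx
        exact ⟨v⁻¹, Set.inv_mem_inv.2 hv, by rw [map_inv, hvx, inv_inv]⟩
      · rintro ⟨v, hv, rfl⟩
        rw [Set.mem_inv]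
        exact ⟨v⁻¹, Set.mem_inv.1 hv, by rw [map_inv]⟩
    rw [h1, hVsymm, hA, ← image_mul π]
    exact image_mono hVU
  rw [mem_nhds_iff]
  exact ⟨O, hOsub.trans hend, hOo, hO1⟩

end OpenMapping

section Lemmas

/-- There is a symmetric open neighbourhood of 1 whose k-th power is inside `U`. -/
lemma exists_symm_open_pow_subset {K : Type*} [Group K] [TopologicalSpace K]
    [IsTopologicalGroup K] (k : ℕ) {U : Set K} (hU : U ∈ 𝓝 (1 : K)) :
    ∃ V : Set K, IsOpen V ∧ (1 : K) ∈ V ∧ V = V⁻¹ ∧ V ^ k ⊆ U := by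
  induction k generalizing U with
  | zero =>
    refine ⟨univ, isOpen_univ, trivial, by simp, ?_⟩
    rw [pow_zero]
    intro x hx
    rw [Set.mem_one] at hx
    subst hx
    exact mem_of_mem_nhds hU
  | succ k ih =>
    obtain ⟨B, hBo, hB1, hBB⟩ := exists_open_nhds_one_mul_subset hU
    obtain ⟨W, hWo, hW1, hWs, hWk⟩ := ih (hBo.mem_nhds hB1)
    refine ⟨(W ∩ B) ∩ (W ∩ B)⁻¹, ((hWo.inter hBo).inter (hWo.inter hBo).inv),
      ⟨⟨hW1, hB1⟩, by rw [Set.mem_inv]; simpa using ⟨hW1, hB1⟩⟩, by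
        ext x; simp only [Set.mem_inter_iff, Set.mem_inv, inv_inv]; tauto, ?_⟩
    rw [pow_succ]
    refine (mul_subset_mul ?_ ?_).trans hBB
    · refine (Set.pow_subset_pow_left ?_).trans hWk
      exact (inter_subset_left).trans inter_subset_left
    · exact inter_subset_left.trans inter_subset_right
end Lemmas

section Pullback

variable {G H : Type*} [Group G] [Group H]

lemma preimage_symm (π : G →* H) {W : Set H} (hW : W = W⁻¹) :
    (π ⁻¹' W) = (π ⁻¹' W)⁻¹ := by
  ext x
  rw [Set.mem_inv, mem_preimage, mem_preimage, map_inv, ← Set.mem_inv, ← hW]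

lemma preimage_pow_subset (π : G →* H) (W : Set H) (k : ℕ) :
    (π ⁻¹' W) ^ k ⊆ π ⁻¹' (W ^ k) := by
  induction k with
  | zero =>
    intro x hx
    rw [pow_zero] at hx ⊢
    rw [Set.mem_one] at hx
    subst hx
    rw [mem_preimage, map_one]
    exact Set.mem_one.2 rfl
  | succ k ih =>
    rw [pow_succ, pow_succ]
    rintro x ⟨a, ha, b, hb, rfl⟩
    rw [mem_preimage, map_mul]
    exact Set.mul_mem_mul (ih ha) hb

lemma preimage_syndetic (π : G →* H) (hπ : Function.Surjective π) {W : Set H}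
    (h : ∃ g : ℕ → H, (⋃ n : ℕ, g n • W) = univ) :
    ∃ g : ℕ → G, (⋃ n : ℕ, g n • (π ⁻¹' W)) = univ := by
  classical
  obtain ⟨g, hg⟩ := h
  choose g' hg' using fun n => hπ (g n)
  refine ⟨g', eq_univ_iff_forall.2 fun x => ?_⟩
  have : π x ∈ ⋃ n : ℕ, g n • W := by rw [hg]; trivial
  rcases mem_iUnion.1 this with ⟨n, hn⟩
  rw [mem_smul_set_iff_inv_smul_mem] at hn
  refine mem_iUnion.2 ⟨n, ?_⟩
  rw [mem_smul_set_iff_inv_smul_mem, smul_eq_mul, mem_preimage, map_mul, map_inv, hg']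
  exact hn

end Pullback

section Continuity

variable {G : Type*} [Group G] [TopologicalSpace G] [IsTopologicalGroup G] [PolishSpace G]
variable {H : Type*} [Group H] [TopologicalSpace H] [IsTopologicalGroup H] [PolishSpace H]

lemma continuous_of_steinhaus (hG : IsSteinhaus G) (π : G →* H)
    (hπ : Function.Surjective π) : Continuous π := by
  obtain ⟨k, _, hk⟩ := hG
  apply continuous_of_continuousAt_one π
  rw [ContinuousAt, map_one]
  intro U hU
  rw [Filter.mem_map]
  obtain ⟨V, hVo, hV1, hVs, hVk⟩ := exists_symm_open_pow_subset k hU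
  have hsynd : ∃ g : ℕ → H, (⋃ n : ℕ, g n • V) = univ :=
    exists_translates_cover (hVo.mem_nhds hV1)
  obtain ⟨U', hU'o, hU'1, hU'k⟩ := hk (π ⁻¹' V) (preimage_symm π hVs)
    (preimage_syndetic π hπ hsynd)
  refine Filter.mem_of_superset (hU'o.mem_nhds hU'1) ?_
  exact hU'k.trans ((_root_.preimage_pow_subset π V k).trans (preimage_mono hVk))

end Continuity

/-- If `G` and `H` are Polish groups, `G` is Steinhaus and `H` is the image of `G` under a
(surjective) group homomorphism, then `H` is Steinhaus. -/
theorem isSteinhaus_of_surjective_hom {G H : Type*}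
    [Group G] [TopologicalSpace G] [IsTopologicalGroup G] [PolishSpace G]
    [Group H] [TopologicalSpace H] [IsTopologicalGroup H] [PolishSpace H]
    (hG : IsSteinhaus G) (π : G →* H) (hπ : Function.Surjective π) :
    IsSteinhaus H := by
  have hc : Continuous π := continuous_of_steinhaus hG π hπ
  obtain ⟨k, hk1, hk⟩ := hG
  refine ⟨k, hk1, ?_⟩
  intro W hWs hWsynd
  obtain ⟨U, hUo, hU1, hUk⟩ := hk (π ⁻¹' W) (preimage_symm π hWs)
    (preimage_syndetic π hπ hWsynd)
  have himg : π '' U ∈ 𝓝 (1 : H) := image_mem_nhds_one π hc hπ (hUo.mem_nhds hU1)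
  rw [mem_nhds_iff] at himg
  obtain ⟨O, hOsub, hOo, hO1⟩ := himg
  refine ⟨O, hOo, hO1, hOsub.trans ?_⟩
  refine (image_mono hUk).trans ?_
  calc π '' ((π ⁻¹' W) ^ k) = (π '' (π ⁻¹' W)) ^ k := Set.image_pow π _ k
    _ ⊆ W ^ k := Set.pow_subset_pow_left (image_preimage_subset _ _)
end

section
/- Let G be a Polish group which has the Bergman property and has a comeagre conjugacy class. Then every group homomorphism from G (as an abstract group) into a locally compact Polish group H is trivial: it sends every element of G to the identity of H. -/
open Pointwise in
/-- If `G` is a Polish group with the Bergman property and a comeagre conjugacy class, then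
every abstract group homomorphism from `G` into a locally compact Polish group is trivial. -/
theorem hom_to_locallyCompact_trivial {G H : Type*}
    [Group G] [TopologicalSpace G] [IsTopologicalGroup G] [PolishSpace G]
    [Group H] [TopologicalSpace H] [IsTopologicalGroup H] [PolishSpace H]
    [LocallyCompactSpace H]
    (hBergman : ∀ W : ℕ → Set G, (∀ n : ℕ, W n ⊆ W (n + 1)) → (⋃ n : ℕ, W n) = Set.univ →
      ∃ n k : ℕ, W n ^ k = Set.univ)
    (hconj : ∃ h : G, {x : G | IsConj h x} ∈ residual G)
    (π : G →* H) :
    ∀ g : G, π g = 1 := by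
  classical
  letI := TopologicalSpace.upgradeIsCompletelyMetrizable G
  letI := TopologicalSpace.upgradeIsCompletelyMetrizable H
  -- Step 1: by the Bergman property, the range of `π` is contained in a compact set.
  obtain ⟨T, hTc, hTr⟩ : ∃ T : Set H, IsCompact T ∧ Set.range π ⊆ T := by
    obtain ⟨n, k, hnk⟩ := hBergman (fun n => π ⁻¹' compactCovering H n)
      (fun n => Set.preimage_mono (compactCovering_subset H (Nat.le_succ n)))
      (Set.eq_univ_of_forall fun g => by
        rcases exists_mem_compactCovering (π g) with ⟨n, hn⟩
        exact Set.mem_iUnion.2 ⟨n, hn⟩)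
    have hpow : ∀ m : ℕ, IsCompact (compactCovering H n ^ m) := by
      intro m
      induction m with
      | zero => rw [pow_zero, ← Set.singleton_one]; exact isCompact_singleton
      | succ m ih => rw [pow_succ]; exact ih.mul (isCompact_compactCovering H n)
    refine ⟨compactCovering H n ^ k, hpow k, ?_⟩
    rintro _ ⟨g, rfl⟩
    have hg : g ∈ (π ⁻¹' compactCovering H n) ^ k := by
      rw [hnk]; exact Set.mem_univ g
    have h₁ : π g ∈ (π '' (π ⁻¹' compactCovering H n)) ^ k := by
      rw [← Set.image_pow]; exact ⟨g, hg, rfl⟩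
    exact Set.pow_subset_pow_left (Set.image_preimage_subset π _) h₁
  -- the closure `K` of the range is a compact "subgroup-like" set
  set K : Set H := closure (Set.range π) with hKdef
  have hrange_sub : Set.range π ⊆ K := subset_closure
  have hKc : IsCompact K := hTc.of_isClosed_subset isClosed_closure
    (closure_minimal hTr hTc.isClosed)
  have h1K : (1 : H) ∈ K := hrange_sub ⟨1, map_one π⟩
  have hmulK : ∀ {x : H}, x ∈ K → ∀ g : G, x * π g ∈ K := by
    intro x hx g
    have hmaps : Set.MapsTo (fun b : H => b * π g) (Set.range ⇑π) (Set.range ⇑π) := by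
      rintro _ ⟨g', rfl⟩
      exact ⟨g' * g, by rw [map_mul]⟩
    have := map_mem_closure (f := fun b : H => b * π g) (continuous_mul_right (π g)) hx hmaps
    simpa using this
  haveI : CompactSpace K := isCompact_iff_compactSpace.mp hKc
  -- the conjugation-invariant function `f`
  let Φ : C(H, C(K, ℝ)) := ContinuousMap.curry
    ⟨fun p : H × K => dist ((p.2 : H) * p.1 * (p.2 : H)⁻¹) 1, by fun_prop⟩
  have hΦ : ∀ (x : H) (u : K), Φ x u = dist ((u : H) * x * (u : H)⁻¹) 1 := fun x u => rfl
  let f : H → ℝ := fun x => ‖Φ x‖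
  have hfc : Continuous f := continuous_norm.comp Φ.continuous
  have hf_one : f (1 : H) = 0 := by
    have hΦ1 : Φ (1 : H) = 0 := ContinuousMap.ext fun u => by
      simp [hΦ]
    show ‖Φ (1 : H)‖ = 0
    rw [hΦ1, norm_zero]
  have hf_zero : ∀ x : H, f x = 0 → x = 1 := by
    intro x hx
    have h1 : ‖Φ x ⟨1, h1K⟩‖ ≤ f x := (Φ x).norm_coe_le_norm _
    rw [hx, hΦ] at h1
    simp only [one_mul, inv_one, mul_one] at h1
    have : dist x 1 ≤ 0 := le_trans (le_abs_self _) h1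
    exact dist_le_zero.mp this
  have hf_le : ∀ (x : H) (g : G), f (π g * x * (π g)⁻¹) ≤ f x := by
    intro x g
    refine (ContinuousMap.norm_le _ (norm_nonneg (Φ x))).2 ?_
    intro u
    have hmem : (u : H) * π g ∈ K := hmulK u.2 g
    have hval : Φ (π g * x * (π g)⁻¹) u = Φ x ⟨(u : H) * π g, hmem⟩ := by
      rw [hΦ, hΦ]
      congr 1
      group
    rw [hval]
    exact (Φ x).norm_coe_le_norm _
  have hf_conj : ∀ (x : H) (g : G), f (π g * x * (π g)⁻¹) = f x := by
    intro x g
    refine le_antisymm (hf_le x g) ?_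
    have h2 := hf_le (π g * x * (π g)⁻¹) g⁻¹
    have h3 : π g⁻¹ * (π g * x * (π g)⁻¹) * (π g⁻¹)⁻¹ = x := by
      rw [map_inv]; group
    rwa [h3] at h2
  -- Step 2: a countable dense subset of the range, and a common translate into the class.
  obtain ⟨t, hts, htc, htd⟩ :=
    (TopologicalSpace.IsSeparable.of_separableSpace (Set.range π)).exists_countable_dense_subset
  haveI := htc.to_subtype
  obtain ⟨h₀, hC⟩ := hconj
  choose gx hgx using fun x : t => hts x.2
  have hAx : ∀ x : t, {y : G | IsConj h₀ (gx x * y)} ∈ residual G := by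
    intro x
    have hmap := (Homeomorph.mulLeft (gx x)).residual_map_eq
    have : {z : G | IsConj h₀ z} ∈ (residual G).map (Homeomorph.mulLeft (gx x)) := by
      rw [hmap]; exact hC
    exact Filter.mem_map.mp this
  obtain ⟨c, hc⟩ : (⋂ x : t, {y : G | IsConj h₀ (gx x * y)}).Nonempty := by
    have hres : (⋂ x : t, {y : G | IsConj h₀ (gx x * y)}) ∈ residual G :=
      countable_iInter_mem.2 hAx
    exact (dense_of_mem_residual hres).nonempty
  -- Step 3: every element of the range, translated by `π c`, has the same `f`-value.
  have hZ : Set.range π ⊆ {y : H | f (y * π c) = f (π h₀)} := by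
    refine htd.trans (closure_minimal ?_
      (isClosed_eq (hfc.comp (continuous_mul_right (π c))) continuous_const))
    intro x hx
    have hcx : IsConj h₀ (gx ⟨x, hx⟩ * c) := by
      have := hc
      rw [Set.mem_iInter] at this
      exact this ⟨x, hx⟩
    obtain ⟨u, hu⟩ := isConj_iff.mp hcx
    show f (x * π c) = f (π h₀)
    have hgx' : π (gx ⟨x, hx⟩) = x := hgx ⟨x, hx⟩
    have : x * π c = π u * π h₀ * (π u)⁻¹ := by
      rw [← hgx', ← map_mul, ← hu]
      simp [map_mul, map_inv]
    rw [this, hf_conj]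
  -- Step 4: conclude.
  have hr0 : f (π h₀) = 0 := by
    have h1 : f (π c⁻¹ * π c) = f (π h₀) := hZ ⟨c⁻¹, rfl⟩
    rw [← map_mul, inv_mul_cancel, map_one, hf_one] at h1
    exact h1.symm
  have hπc : π c = 1 := by
    have h1 : f (π (1 : G) * π c) = f (π h₀) := hZ ⟨1, rfl⟩
    rw [hr0] at h1
    have := hf_zero _ h1
    rwa [map_one, one_mul] at this
  intro g
  have hg : f (π g * π c) = f (π h₀) := hZ ⟨g, rfl⟩
  rw [hr0] at hg
  have := hf_zero _ hg
  rwa [hπc, mul_one] at this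
end

section
/- Let B and C be clopen subsets of the Cantor space 2^ℕ such that C ∩ B ≠ ∅ and C \ B ≠ ∅. Let G₁ = {f ∈ Homeo(2^ℕ) : f[B] = B} and G₂ = {f ∈ Homeo(2^ℕ) : f(x) = x for all x ∉ C}. Then every f ∈ Homeo(2^ℕ) can be written as f = g₁ g₂ g₃ g₄ g₅ with g₁, g₃, g₅ ∈ G₁ and g₂, g₄ ∈ G₂; that is, Homeo(2^ℕ) = G₁G₂G₁G₂G₁. -/
/-- The group of self-homeomorphisms of a topological space, under composition. -/
instance homeomorphGroup {X : Type*} [TopologicalSpace X] : Group (X ≃ₜ X) where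
  mul f g := g.trans f
  one := Homeomorph.refl X
  inv := Homeomorph.symm
  mul_assoc _ _ _ := rfl
  one_mul _ := rfl
  mul_one _ := rfl
  inv_mul_cancel f := Homeomorph.ext fun x => f.symm_apply_apply x

open Set PiNat

namespace CantorG

abbrev X : Type := ℕ → Bool

lemma isClopen_cyl (x : X) (n : ℕ) : IsClopen (cylinder x n) := by
  constructor
  · rw [cylinder_eq_pi]
    exact isClosed_set_pi fun i _ => isClosed_discrete _
  · exact isOpen_cylinder _ x n

lemma exists_cyl_subset {U : Set X} (hU : IsOpen U) {x : X} (hx : x ∈ U) :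
    ∃ n, cylinder x n ⊆ U := by
  obtain ⟨v, ⟨y, n, rfl⟩, hxv, hvU⟩ :=
    (isTopologicalBasis_cylinders fun _ : ℕ => Bool).exists_subset_of_mem_open hx hU
  exact ⟨n, by rw [mem_cylinder_iff_eq.1 hxv]; exact hvU⟩

lemma exists_determining {K : Set X} (hK : IsClopen K) :
    ∃ n, ∀ x y : X, (∀ i < n, x i = y i) → (x ∈ K ↔ y ∈ K) := by
  have H : ∀ x : X, ∃ n : ℕ, cylinder x n ⊆ K ∨ cylinder x n ⊆ Kᶜ := by
    intro x
    by_cases hx : x ∈ K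
    · obtain ⟨n, hn⟩ := exists_cyl_subset hK.isOpen hx
      exact ⟨n, Or.inl hn⟩
    · obtain ⟨n, hn⟩ := exists_cyl_subset hK.isClosed.isOpen_compl hx
      exact ⟨n, Or.inr hn⟩
  choose nn hnn using H
  obtain ⟨t, ht⟩ := isCompact_univ.elim_finite_subcover
    (fun x : X => cylinder x (nn x)) (fun x => isOpen_cylinder _ x (nn x))
    (fun x _ => mem_iUnion.2 ⟨x, self_mem_cylinder _ _⟩)
  refine ⟨t.sup nn, fun x y hxy => ?_⟩
  obtain ⟨z, hz, hxz⟩ := mem_iUnion₂.1 (ht (mem_univ x))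
  have hxz' : ∀ i < nn z, x i = z i := mem_cylinder_iff.1 hxz
  have hyz : y ∈ cylinder z (nn z) := by
    intro i hi
    rw [← hxy i (lt_of_lt_of_le hi (Finset.le_sup hz))]
    exact hxz' i hi
  rcases hnn z with h | h
  · exact ⟨fun _ => h hyz, fun _ => h hxz⟩
  · exact ⟨fun hxK => absurd hxK (h hxz), fun hyK => absurd hyK (h hyz)⟩





/-- prepend a bit -/
def bcons (b : Bool) (x : X) : X := fun n => Nat.casesOn n b x

lemma continuous_bcons (b : Bool) : Continuous (bcons b) :=
  continuous_pi fun n => by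
    cases n with
    | zero => exact continuous_const
    | succ m => exact continuous_apply m

def sumEquiv : (X ⊕ X) ≃ X :=
    { toFun := Sum.elim (bcons true) (bcons false)
      invFun := fun x => if x 0 = true then Sum.inl (fun n => x (n + 1))
        else Sum.inr (fun n => x (n + 1))
      left_inv := by
        rintro (x | x) <;> simp [bcons]
      right_inv := fun x => by
        show Sum.elim (bcons true) (bcons false)
          (if x 0 = true then Sum.inl fun n => x (n + 1) else Sum.inr fun n => x (n + 1)) = x
        by_cases h : x 0 = true
        · rw [if_pos h]
          funext n
          cases n with
          | zero => exact h.symm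
          | succ m => rfl
        · rw [if_neg h]
          funext n
          cases n with
          | zero => exact (Bool.eq_false_iff.mpr h).symm
          | succ m => rfl }

def sumHomeo : (X ⊕ X) ≃ₜ X :=
  Continuous.homeoOfEquivCompactToT2 (f := sumEquiv)
    ((continuous_bcons true).sumElim (continuous_bcons false))

def discreteHomeo {α β : Type*} [TopologicalSpace α] [TopologicalSpace β]
    [DiscreteTopology α] [DiscreteTopology β] (e : α ≃ β) : α ≃ₜ β :=
  ⟨e, continuous_of_discreteTopology, continuous_of_discreteTopology⟩

def finOneProdHomeo : (Fin 1 × X) ≃ₜ X where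
  toEquiv := { toFun := Prod.snd, invFun := fun x => (0, x),
               left_inv := fun p => by
                 obtain ⟨i, x⟩ := p
                 simp [Subsingleton.elim (0 : Fin 1) i]
               right_inv := fun x => rfl }
  continuous_toFun := continuous_snd
  continuous_invFun := continuous_const.prodMk continuous_id

lemma finProdHomeo : ∀ m : ℕ, Nonempty ((Fin (m + 1) × X) ≃ₜ X)
  | 0 => ⟨finOneProdHomeo⟩
  | (m + 1) => by
    obtain ⟨e⟩ := finProdHomeo m
    exact ⟨(((discreteHomeo finSumFinEquiv.symm).prodCongr (Homeomorph.refl X)).trans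
      Homeomorph.sumProdDistrib).trans ((e.sumCongr finOneProdHomeo).trans sumHomeo)⟩


/-- fill a finite prefix into an infinite sequence of `false`s -/
def chi (n : ℕ) (s : Fin n → Bool) : X := fun i => if h : i < n then s ⟨i, h⟩ else false

/-- Any nonempty clopen subset of Cantor space is homeomorphic to Cantor space. -/
lemma clopen_homeo {K : Set X} (hK : IsClopen K) (hne : K.Nonempty) :
    Nonempty (↥K ≃ₜ X) := by
  obtain ⟨n, hn⟩ := exists_determining hK
  set S := {s : Fin n → Bool // chi n s ∈ K} with hS
  have memK : ∀ (s : Fin n → Bool) (x : X), (∀ i : Fin n, x i.1 = s i) → (x ∈ K ↔ chi n s ∈ K) := by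
    intro s x hx
    apply hn
    intro i hi
    rw [hx ⟨i, hi⟩, chi, dif_pos hi]
  let raw : S × X → X := fun p m => if h : m < n then p.1.1 ⟨m, h⟩ else p.2 (m - n)
  have hraw : Continuous raw := by
    refine continuous_pi fun m => ?_
    by_cases h : m < n
    · have : (fun (p : S × X) => if h : m < n then p.1.1 ⟨m, h⟩ else p.2 (m - n)) =
        fun p => p.1.1 ⟨m, h⟩ := funext fun p => dif_pos h
      exact this ▸ (continuous_apply _).comp (continuous_subtype_val.comp continuous_fst)
    · have : (fun (p : S × X) => if h : m < n then p.1.1 ⟨m, h⟩ else p.2 (m - n)) =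
        fun p => p.2 (m - n) := funext fun p => dif_neg h
      exact this ▸ (continuous_apply _).comp continuous_snd
  have hmem : ∀ p : S × X, raw p ∈ K := fun p =>
    (memK p.1.1 _ (fun i => dif_pos i.2)).mpr p.1.2
  let e : (S × X) ≃ ↥K :=
    { toFun := fun p => ⟨raw p, hmem p⟩
      invFun := fun x => (⟨fun i => x.1 i.1, by
        exact (memK _ x.1 (fun i => rfl)).mp x.2⟩, fun m => x.1 (n + m))
      left_inv := by
        rintro ⟨⟨s, hs⟩, y⟩
        refine Prod.ext (Subtype.ext (funext fun i => ?_)) (funext fun m => ?_)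
        · show raw _ i.1 = s i
          simp only [raw, dif_pos i.2]
        · show raw _ (n + m) = y m
          simp only [raw, show ¬(n + m < n) by omega, dif_neg, not_false_iff]
          congr 1
          omega
      right_inv := by
        rintro ⟨x, hx⟩
        refine Subtype.ext (funext fun m => ?_)
        show raw _ m = x m
        by_cases h : m < n
        · simp only [raw, dif_pos h]
        · simp only [raw, dif_neg h]
          congr 1
          omega }
  have hcont : Continuous e := hraw.subtype_mk _
  have hSne : Nonempty S := by
    obtain ⟨x, hx⟩ := hne
    exact ⟨⟨fun i => x i.1, (memK _ x (fun i => rfl)).mp hx⟩⟩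
  obtain ⟨k, ⟨eS⟩⟩ := Finite.exists_equiv_fin S
  match k, eS with
  | 0, eS => exact (eS hSne.some).elim0
  | (m + 1), eS =>
    obtain ⟨eF⟩ := finProdHomeo m
    exact ⟨(hcont.homeoOfEquivCompactToT2 (f := e)).symm.trans
      ((((discreteHomeo eS).prodCongr (Homeomorph.refl X)).trans eF))⟩



open Classical in
/-- Piecewise map: `e₁` on `D`, `e₂` on `K \ D`, identity elsewhere. -/
noncomputable def pmap (K D E : Set X) (e₁ : ↥D → ↥E) (e₂ : ↥(K \ D) → ↥(K \ E)) (x : X) : X :=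
  if h : x ∈ D then (e₁ ⟨x, h⟩ : X)
  else if h2 : x ∈ K then (e₂ ⟨x, h2, h⟩ : X)
  else x

lemma pmap_of_mem {K D E : Set X} {e₁ : ↥D → ↥E} {e₂ : ↥(K \ D) → ↥(K \ E)} {x : X}
    (h : x ∈ D) : pmap K D E e₁ e₂ x = (e₁ ⟨x, h⟩ : X) := dif_pos h

lemma pmap_of_mem_diff {K D E : Set X} {e₁ : ↥D → ↥E} {e₂ : ↥(K \ D) → ↥(K \ E)} {x : X}
    (h : x ∈ K \ D) : pmap K D E e₁ e₂ x = (e₂ ⟨x, h⟩ : X) := by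
  rw [pmap, dif_neg h.2, dif_pos h.1]

lemma pmap_of_not_mem {K D E : Set X} {e₁ : ↥D → ↥E} {e₂ : ↥(K \ D) → ↥(K \ E)} {x : X}
    (hDK : D ⊆ K) (h : x ∉ K) : pmap K D E e₁ e₂ x = x := by
  rw [pmap, dif_neg (fun hx => h (hDK hx)), dif_neg h]

lemma pmap_leftInverse {K D E : Set X} (hDK : D ⊆ K) (hEK : E ⊆ K)
    (e₁ : ↥D ≃ ↥E) (e₂ : ↥(K \ D) ≃ ↥(K \ E)) :
    Function.LeftInverse (pmap K E D e₁.symm e₂.symm) (pmap K D E e₁ e₂) := by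
  intro x
  by_cases hx : x ∈ D
  · rw [pmap_of_mem hx, pmap_of_mem (e₁ ⟨x, hx⟩).2]
    have : (⟨((e₁ ⟨x, hx⟩ : ↥E) : X), (e₁ ⟨x, hx⟩).2⟩ : ↥E) = e₁ ⟨x, hx⟩ := rfl
    rw [this, Equiv.symm_apply_apply]
  · by_cases hx2 : x ∈ K
    · rw [pmap_of_mem_diff (⟨hx2, hx⟩ : x ∈ K \ D),
        pmap_of_mem_diff (e₂ ⟨x, hx2, hx⟩).2]
      have : (⟨((e₂ ⟨x, hx2, hx⟩ : ↥(K \ E)) : X), (e₂ ⟨x, hx2, hx⟩).2⟩ : ↥(K \ E)) =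
          e₂ ⟨x, hx2, hx⟩ := rfl
      rw [this, Equiv.symm_apply_apply]
    · rw [pmap_of_not_mem hDK hx2, pmap_of_not_mem hEK hx2]

lemma continuous_pmap {K D E : Set X} (hK : IsClopen K) (hD : IsClopen D) (hDK : D ⊆ K)
    {e₁ : ↥D → ↥E} {e₂ : ↥(K \ D) → ↥(K \ E)}
    (h₁ : Continuous e₁) (h₂ : Continuous e₂) :
    Continuous (pmap K D E e₁ e₂) := by
  rw [continuous_iff_continuousAt]
  intro x
  by_cases hx : x ∈ D
  · have hco : ContinuousOn (pmap K D E e₁ e₂) D := by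
      rw [continuousOn_iff_continuous_restrict]
      have : D.domRestrict (pmap K D E e₁ e₂) = fun y => (e₁ y : X) := by
        funext y
        exact pmap_of_mem y.2
      rw [this]
      exact continuous_subtype_val.comp h₁
    exact hco.continuousAt (hD.isOpen.mem_nhds hx)
  · by_cases hx2 : x ∈ K
    · have hco : ContinuousOn (pmap K D E e₁ e₂) (K \ D) := by
        rw [continuousOn_iff_continuous_restrict]
        have : (K \ D).domRestrict (pmap K D E e₁ e₂) = fun y => (e₂ y : X) := by
          funext y
          exact pmap_of_mem_diff y.2
        rw [this]
        exact continuous_subtype_val.comp h₂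
      exact hco.continuousAt ((hK.isOpen.sdiff hD.isClosed).mem_nhds ⟨hx2, hx⟩)
    · have hco : ContinuousOn (pmap K D E e₁ e₂) Kᶜ := by
        rw [continuousOn_iff_continuous_restrict]
        have : Kᶜ.domRestrict (pmap K D E e₁ e₂) = Subtype.val := by
          funext y
          exact pmap_of_not_mem hDK y.2
        rw [this]
        exact continuous_subtype_val
      exact hco.continuousAt (hK.isClosed.isOpen_compl.mem_nhds hx2)

/-- Gluing two subtype homeomorphisms into a homeomorphism of the whole space. -/
lemma glue {K D E : Set X} (hK : IsClopen K) (hD : IsClopen D) (hE : IsClopen E)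
    (hDK : D ⊆ K) (hEK : E ⊆ K) (e₁ : ↥D ≃ₜ ↥E) (e₂ : ↥(K \ D) ≃ₜ ↥(K \ E)) :
    ∃ h : X ≃ₜ X, (∀ x ∉ K, h x = x) ∧ h '' D = E := by
  let Φ : X ≃ X :=
    { toFun := pmap K D E e₁.toEquiv e₂.toEquiv
      invFun := pmap K E D e₁.toEquiv.symm e₂.toEquiv.symm
      left_inv := pmap_leftInverse hDK hEK e₁.toEquiv e₂.toEquiv
      right_inv := pmap_leftInverse hEK hDK e₁.toEquiv.symm e₂.toEquiv.symm }
  have hcont : Continuous Φ :=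
    continuous_pmap hK hD hDK e₁.continuous e₂.continuous
  refine ⟨hcont.homeoOfEquivCompactToT2 (f := Φ), fun x hx => pmap_of_not_mem hDK hx, ?_⟩
  show Φ '' D = E
  ext y
  constructor
  · rintro ⟨x, hx, rfl⟩
    rw [show Φ x = _ from pmap_of_mem hx]
    exact (e₁.toEquiv ⟨x, hx⟩).2
  · intro hy
    refine ⟨(e₁.symm ⟨y, hy⟩ : X), (e₁.symm ⟨y, hy⟩).2, ?_⟩
    rw [show Φ _ = _ from pmap_of_mem (e₁.symm ⟨y, hy⟩).2]
    have : (⟨((e₁.symm ⟨y, hy⟩ : ↥D) : X), (e₁.symm ⟨y, hy⟩).2⟩ : ↥D) = e₁.symm ⟨y, hy⟩ := rfl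
    rw [this]
    simp

lemma image_eq_self_of_support {h : X ≃ₜ X} {K M : Set X} (hsupp : ∀ x ∉ K, h x = x)
    (hMK : ∀ x ∈ M, x ∉ K) : h '' M = M := by
  ext y
  constructor
  · rintro ⟨x, hx, rfl⟩
    rwa [hsupp x (hMK x hx)]
  · intro hy
    exact ⟨y, hy, hsupp y (hMK y hy)⟩

lemma image_support_set {h : X ≃ₜ X} {K : Set X} (hsupp : ∀ x ∉ K, h x = x) :
    h '' K = K := by
  have h1 : h '' Kᶜ = Kᶜ := image_eq_self_of_support hsupp (fun x hx => hx)
  have h2 : h '' Kᶜ = (h '' K)ᶜ := Set.image_compl_eq h.bijective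
  have := h1 ▸ h2
  exact compl_inj_iff.mp this.symm

lemma lemA {K D E : Set X} (hK : IsClopen K) (hD : IsClopen D) (hE : IsClopen E)
    (hDK : D ⊆ K) (hEK : E ⊆ K) (h0 : D = ∅ ↔ E = ∅) (h1 : D = K ↔ E = K) :
    ∃ h : X ≃ₜ X, (∀ x ∉ K, h x = x) ∧ h '' D = E := by
  by_cases hDe : D = ∅
  · refine ⟨Homeomorph.refl X, fun x _ => rfl, ?_⟩
    rw [hDe, h0.mp hDe]
    simp
  by_cases hDK' : D = K
  · refine ⟨Homeomorph.refl X, fun x _ => rfl, ?_⟩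
    rw [hDK', h1.mp hDK']
    simp
  · have hDne : D.Nonempty := Set.nonempty_iff_ne_empty.2 hDe
    have hEne : E.Nonempty := Set.nonempty_iff_ne_empty.2 (fun h => hDe (h0.mpr h))
    have hKDne : (K \ D).Nonempty := by
      rw [Set.nonempty_iff_ne_empty]
      intro h
      exact hDK' (le_antisymm hDK (Set.diff_eq_empty.mp h))
    have hKEne : (K \ E).Nonempty := by
      rw [Set.nonempty_iff_ne_empty]
      intro h
      exact hDK' (h1.mpr (le_antisymm hEK (Set.diff_eq_empty.mp h)))
    obtain ⟨eD⟩ := clopen_homeo hD hDne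
    obtain ⟨eE⟩ := clopen_homeo hE hEne
    obtain ⟨eD'⟩ := clopen_homeo (hK.diff hD) hKDne
    obtain ⟨eE'⟩ := clopen_homeo (hK.diff hE) hKEne
    exact glue hK hD hE hDK hEK (eD.trans eE.symm) (eD'.trans eE'.symm)

lemma exists_half {K : Set X} (hK : IsClopen K) (hne : K.Nonempty) :
    ∃ H : Set X, IsClopen H ∧ H ⊆ K ∧ H.Nonempty ∧ H ≠ K := by
  obtain ⟨x, hx⟩ := hne
  obtain ⟨n, hn⟩ := exists_cyl_subset hK.isOpen hx
  refine ⟨PiNat.cylinder x (n + 1), isClopen_cyl x (n + 1),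
    (PiNat.cylinder_anti x n.le_succ).trans hn, ⟨x, PiNat.self_mem_cylinder _ _⟩, ?_⟩
  intro hEq
  have hzK : Function.update x n (!(x n)) ∈ K :=
    hn (fun i hi => Function.update_of_ne (by omega) _ _)
  have hzc : Function.update x n (!(x n)) ∉ PiNat.cylinder x (n + 1) := by
    intro h
    have := PiNat.mem_cylinder_iff.1 h n (lt_add_one n)
    rw [Function.update_self] at this
    simp at this
  exact hzc (hEq ▸ hzK)

end CantorG


set_option maxHeartbeats 2000000 in
open CantorG Set in
/-- If `B, C` are clopen subsets of the Cantor space with `C ∩ B` and `C \ B` nonempty,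
`G₁` the set of homeomorphisms preserving `B` and `G₂` the set of homeomorphisms supported
in `C`, then `Homeo(2^ℕ) = G₁G₂G₁G₂G₁`. -/
theorem homeoCantor_eq_G1G2G1G2G1 (B C : Set (ℕ → Bool))
    (hB : IsClopen B) (hC : IsClopen C)
    (hCB : (C ∩ B).Nonempty) (hCnotB : (C \ B).Nonempty)
    (f : (ℕ → Bool) ≃ₜ (ℕ → Bool)) :
    ∃ g₁ g₂ g₃ g₄ g₅ : (ℕ → Bool) ≃ₜ (ℕ → Bool),
      g₁ '' B = B ∧ g₃ '' B = B ∧ g₅ '' B = B ∧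
      (∀ x ∉ C, g₂ x = x) ∧ (∀ x ∉ C, g₄ x = x) ∧
      f = g₁ * g₂ * g₃ * g₄ * g₅ := by
  classical
  -- image lemma for products
  have hmul : ∀ (p q : (ℕ → Bool) ≃ₜ (ℕ → Bool)) (s : Set (ℕ → Bool)),
      (p * q) '' s = p '' (q '' s) := fun p q s => by
    rw [show ⇑(p * q) = ⇑p ∘ ⇑q from rfl, Set.image_comp]
  have hsymm_img : ∀ (e : (ℕ → Bool) ≃ₜ (ℕ → Bool)) (s : Set (ℕ → Bool)),
      e.symm '' (e '' s) = s := fun e s => by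
    rw [← Set.image_comp, show ⇑e.symm ∘ ⇑e = id from funext e.symm_apply_apply, Set.image_id]
  -- regions
  have hP1 : IsClopen (C ∩ B) := hC.inter hB
  have hP3 : IsClopen (C \ B) := hC.diff hB
  obtain ⟨H1, hH1, hH1P, hH1ne, hH1neq⟩ := CantorG.exists_half hP1 hCB
  obtain ⟨H3, hH3, hH3P, hH3ne, hH3neq⟩ := CantorG.exists_half hP3 hCnotB
  obtain ⟨w1, hw1P, hw1H⟩ : ∃ w, w ∈ C ∩ B ∧ w ∉ H1 := by
    by_contra h
    push_neg at h
    exact hH1neq (Set.Subset.antisymm hH1P h)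
  obtain ⟨p3, hp3P, hp3H⟩ : ∃ w, w ∈ C \ B ∧ w ∉ H3 := by
    by_contra h
    push_neg at h
    exact hH3neq (Set.Subset.antisymm hH3P h)
  have hw1C : w1 ∈ C := hw1P.1
  have hw1B : w1 ∈ B := hw1P.2
  have hp3C : p3 ∈ C := hp3P.1
  have hp3B : p3 ∉ B := hp3P.2
  have hH1B : H1 ⊆ B := fun x hx => (hH1P hx).2
  have hH1C : H1 ⊆ C := fun x hx => (hH1P hx).1
  have hH3C : H3 ⊆ C := fun x hx => (hH3P hx).1
  have hH3Bc : H3 ⊆ Bᶜ := fun x hx => (hH3P hx).2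
  have hBne : B.Nonempty := ⟨w1, hw1B⟩
  have hBcne : Bᶜ.Nonempty := ⟨p3, hp3B⟩
  have hH1neB : H1 ≠ B := fun h => hw1H (h.symm ▸ hw1B)
  have hH3neBc : H3 ≠ Bᶜ := fun h => hp3H (h.symm ▸ hp3B)
  -- target set
  set D : Set (ℕ → Bool) := ⇑f '' B with hDdef
  have hD : IsClopen D := by
    rw [hDdef, ← Homeomorph.preimage_symm]
    exact hB.preimage f.symm.continuous
  have hDne : D.Nonempty := hBne.image f
  have hDneU : D ≠ univ := by
    intro h
    have h2 : f.symm '' D = f.symm '' univ := by rw [h]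
    rw [hDdef, hsymm_img, Set.image_univ, f.symm.surjective.range_eq] at h2
    exact hp3B (h2.symm ▸ Set.mem_univ p3)
  -- the modified target
  set S' : Set (ℕ → Bool) := if D ∩ B = ∅ then ∅ else if D ∩ B = B then B else H1 with hS'def
  set T' : Set (ℕ → Bool) := if D \ B = ∅ then ∅ else if D \ B = Bᶜ then Bᶜ else H3 with hT'def
  have hS' : IsClopen S' := by
    rw [hS'def]; split_ifs with h1 h2
    exacts [isClopen_empty, hB, hH1]
  have hT' : IsClopen T' := by
    rw [hT'def]; split_ifs with h1 h2
    exacts [isClopen_empty, hB.compl, hH3]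
  have hS'B : S' ⊆ B := by
    rw [hS'def]; split_ifs with h1 h2
    exacts [Set.empty_subset _, Set.Subset.rfl, hH1B]
  have hT'Bc : T' ⊆ Bᶜ := by
    rw [hT'def]; split_ifs with h1 h2
    exacts [Set.empty_subset _, Set.Subset.rfl, hH3Bc]
  have hS'0 : S' = ∅ ↔ D ∩ B = ∅ := by
    rw [hS'def]; split_ifs with h1 h2
    · exact iff_of_true rfl h1
    · exact iff_of_false hBne.ne_empty h1
    · exact iff_of_false hH1ne.ne_empty h1
  have hS'K : S' = B ↔ D ∩ B = B := by
    rw [hS'def]; split_ifs with h1 h2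
    · exact iff_of_false (fun h => hBne.ne_empty h.symm) (fun h => hBne.ne_empty (h.symm.trans h1))
    · exact iff_of_true rfl h2
    · exact iff_of_false hH1neB h2
  have hT'0 : T' = ∅ ↔ D \ B = ∅ := by
    rw [hT'def]; split_ifs with h1 h2
    · exact iff_of_true rfl h1
    · exact iff_of_false hBcne.ne_empty h1
    · exact iff_of_false hH3ne.ne_empty h1
  have hT'K : T' = Bᶜ ↔ D \ B = Bᶜ := by
    rw [hT'def]; split_ifs with h1 h2
    · exact iff_of_false (fun h => hBcne.ne_empty h.symm) (fun h => hBcne.ne_empty (h.symm.trans h1))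
    · exact iff_of_true rfl h2
    · exact iff_of_false hH3neBc h2
  have hDsplit : D ∩ B ∪ D \ B = D := Set.inter_union_diff D B
  -- g₄ : supported in C, maps C ∩ B onto H1 ∪ H3
  obtain ⟨g₄, hg₄supp, hg₄img⟩ := CantorG.lemA hC hP1 (hH1.union hH3)
    Set.inter_subset_left (Set.union_subset hH1C hH3C)
    (iff_of_false hCB.ne_empty (hH1ne.inl).ne_empty)
    (iff_of_false
      (by intro h; rw [← h] at hp3C; exact hp3B hp3C.2)
      (by intro h; rw [← h] at hw1C
          rcases hw1C with h' | h'
          · exact hw1H h'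
          · exact hH3Bc h' hw1B))
  have hBsplit : C ∩ B ∪ B \ C = B := by rw [Set.inter_comm]; exact Set.inter_union_diff B C
  have hg4B : g₄ '' B = (H1 ∪ H3) ∪ B \ C := by
    conv_lhs => rw [← hBsplit]
    rw [Set.image_union, hg₄img,
      CantorG.image_eq_self_of_support (M := B \ C) hg₄supp (fun x hx => hx.2)]
  -- gBc : supported in Bᶜ, maps H3 onto (T' \ C) ∪ H3
  obtain ⟨gBc, hgBcsupp, hgBcimg⟩ := CantorG.lemA hB.compl hH3 ((hT'.diff hC).union hH3)
    hH3Bc (Set.union_subset (Set.diff_subset.trans hT'Bc) hH3Bc)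
    (iff_of_false hH3ne.ne_empty (hH3ne.inr).ne_empty)
    (iff_of_false hH3neBc
      (by intro h
          have hmem : p3 ∈ (Bᶜ : Set (ℕ → Bool)) := hp3B
          rw [← h] at hmem
          rcases hmem with h' | h'
          · exact h'.2 hp3C
          · exact hp3H h'))
  -- gB : supported in B, maps (B \ C) ∪ H1 onto (S' \ C) ∪ H1
  obtain ⟨gB, hgBsupp, hgBimg⟩ := CantorG.lemA hB ((hB.diff hC).union hH1)
    ((hS'.diff hC).union hH1)
    (Set.union_subset Set.diff_subset hH1B)
    (Set.union_subset (Set.diff_subset.trans hS'B) hH1B)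
    (iff_of_false (hH1ne.inr).ne_empty (hH1ne.inr).ne_empty)
    (iff_of_false
      (by intro h; rw [← h] at hw1B
          rcases hw1B with h' | h'
          · exact h'.2 hw1C
          · exact hw1H h')
      (by intro h; rw [← h] at hw1B
          rcases hw1B with h' | h'
          · exact h'.2 hw1C
          · exact hw1H h'))
  -- g₂ : supported in C, maps H1 ∪ H3 onto (S' ∪ T') ∩ C
  have hD'Cne : ((S' ∪ T') ∩ C).Nonempty := by
    by_cases hDB : D ∩ B = ∅
    · have hDnB : D \ B ≠ ∅ := by
        intro h
        exact hDne.ne_empty (by rw [← hDsplit, hDB, h, Set.empty_union])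
      have hT'cases : T' = Bᶜ ∨ T' = H3 := by
        rw [hT'def, if_neg hDnB]
        by_cases h : D \ B = Bᶜ
        · exact Or.inl (if_pos h)
        · exact Or.inr (if_neg h)
      rcases hT'cases with h | h
      · refine ⟨p3, Set.mem_inter (Set.mem_union_right _ ?_) hp3C⟩
        rw [h]; exact hp3B
      · obtain ⟨x, hx⟩ := hH3ne
        refine ⟨x, Set.mem_inter (Set.mem_union_right _ ?_) (hH3C hx)⟩
        rw [h]; exact hx
    · have hS'cases : S' = B ∨ S' = H1 := by
        rw [hS'def, if_neg hDB]
        by_cases h : D ∩ B = B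
        · exact Or.inl (if_pos h)
        · exact Or.inr (if_neg h)
      rcases hS'cases with h | h
      · refine ⟨w1, Set.mem_inter (Set.mem_union_left _ ?_) hw1C⟩
        rw [h]; exact hw1B
      · obtain ⟨x, hx⟩ := hH1ne
        refine ⟨x, Set.mem_inter (Set.mem_union_left _ ?_) (hH1C hx)⟩
        rw [h]; exact hx
  have hD'CneC : (S' ∪ T') ∩ C ≠ C := by
    by_cases hDBB : D ∩ B = B
    · have hDnBc : D \ B ≠ Bᶜ := by
        intro h
        apply hDneU
        rw [← hDsplit, hDBB, h, Set.union_compl_self]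
      have hT'sub : T' ⊆ H3 := by
        rw [hT'def]
        by_cases h1 : D \ B = ∅
        · rw [if_pos h1]; exact Set.empty_subset _
        · rw [if_neg h1, if_neg hDnBc]
      intro h
      rw [← h] at hp3C
      rcases hp3C.1 with h' | h'
      · exact hp3B (hS'B h')
      · exact hp3H (hT'sub h')
    · have hS'sub : S' ⊆ H1 := by
        rw [hS'def]
        by_cases h1 : D ∩ B = ∅
        · rw [if_pos h1]; exact Set.empty_subset _
        · rw [if_neg h1, if_neg hDBB]
      intro h
      rw [← h] at hw1C
      rcases hw1C.1 with h' | h'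
      · exact hw1H (hS'sub h')
      · exact hT'Bc h' hw1B
  obtain ⟨g₂, hg₂supp, hg₂img⟩ := CantorG.lemA hC (hH1.union hH3) ((hS'.union hT').inter hC)
    (Set.union_subset hH1C hH3C) Set.inter_subset_right
    (iff_of_false (hH1ne.inl).ne_empty hD'Cne.ne_empty)
    (iff_of_false
      (by intro h; rw [← h] at hw1C
          rcases hw1C with h' | h'
          · exact hw1H h'
          · exact hH3Bc h' hw1B)
      hD'CneC)
  -- aB : supported in B, maps S' onto D ∩ B
  obtain ⟨aB, haBsupp, haBimg⟩ := CantorG.lemA hB hS' (hD.inter hB)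
    hS'B Set.inter_subset_right hS'0 hS'K
  -- aBc : supported in Bᶜ, maps T' onto D \ B
  obtain ⟨aBc, haBcsupp, haBcimg⟩ := CantorG.lemA hB.compl hT' (hD.diff hB)
    hT'Bc (fun x hx => hx.2) hT'0 hT'K
  -- basic image facts
  have haB_B : aB '' B = B := CantorG.image_support_set haBsupp
  have hgB_B : gB '' B = B := CantorG.image_support_set hgBsupp
  have haBc_B : aBc '' B = B :=
    CantorG.image_eq_self_of_support haBcsupp (fun x hx hc => hc hx)
  have hgBc_B : gBc '' B = B :=
    CantorG.image_eq_self_of_support hgBcsupp (fun x hx hc => hc hx)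
  -- the total image computation
  have hsub1 : B \ C ∪ H1 ⊆ B := Set.union_subset Set.diff_subset hH1B
  have hsub2 : T' \ C ∪ H3 ⊆ Bᶜ := Set.union_subset (Set.diff_subset.trans hT'Bc) hH3Bc
  have e1 : (H1 ∪ H3) ∪ B \ C = (B \ C ∪ H1) ∪ H3 := by
    rw [Set.union_comm, ← Set.union_assoc]
  have hgBc1 : gBc '' ((B \ C ∪ H1) ∪ H3) = (B \ C ∪ H1) ∪ (T' \ C ∪ H3) := by
    rw [Set.image_union, hgBcimg,
      CantorG.image_eq_self_of_support (M := B \ C ∪ H1) hgBcsupp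
        (fun x hx hc => hc (hsub1 hx))]
  have hgB1 : gB '' ((B \ C ∪ H1) ∪ (T' \ C ∪ H3)) = (S' \ C ∪ H1) ∪ (T' \ C ∪ H3) := by
    rw [Set.image_union, hgBimg,
      CantorG.image_eq_self_of_support (M := T' \ C ∪ H3) hgBsupp
        (fun x hx => hsub2 hx)]
  have e2 : (S' \ C ∪ H1) ∪ (T' \ C ∪ H3) = (S' \ C ∪ T' \ C) ∪ (H1 ∪ H3) := by
    rw [Set.union_assoc, Set.union_left_comm H1 (T' \ C) H3, ← Set.union_assoc]
  have hg2' : g₂ '' ((S' \ C ∪ T' \ C) ∪ (H1 ∪ H3)) = S' ∪ T' := by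
    rw [Set.image_union, hg₂img,
      CantorG.image_eq_self_of_support (M := S' \ C ∪ T' \ C) hg₂supp
        (fun x hx => by rcases hx with h | h; exacts [h.2, h.2]),
      ← Set.union_diff_distrib, Set.diff_union_inter]
  have haBc2 : aBc '' (S' ∪ T') = S' ∪ D \ B := by
    rw [Set.image_union, haBcimg,
      CantorG.image_eq_self_of_support (M := S') haBcsupp (fun x hx hc => hc (hS'B hx))]
  have haB2 : aB '' (S' ∪ D \ B) = D := by
    rw [Set.image_union, haBimg,
      CantorG.image_eq_self_of_support (M := D \ B) haBsupp (fun x hx => hx.2), hDsplit]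
  have hwB : (aB * aBc * g₂ * (gB * gBc) * g₄) '' B = D := by
    rw [hmul, hmul, hmul, hg4B, e1, hmul gB gBc, hgBc1, hgB1, e2, hg2',
      hmul aB aBc, haBc2, haB2]
  refine ⟨aB * aBc, g₂, gB * gBc, g₄, (aB * aBc * g₂ * (gB * gBc) * g₄)⁻¹ * f,
    ?_, ?_, ?_, hg₂supp, hg₄supp, ?_⟩
  · rw [hmul, haBc_B, haB_B]
  · rw [hmul, hgBc_B, hgB_B]
  · rw [hmul,
      show ⇑(aB * aBc * g₂ * (gB * gBc) * g₄)⁻¹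
        = ⇑(aB * aBc * g₂ * (gB * gBc) * g₄).symm from rfl,
      ← hDdef, ← hwB, hsymm_img]
  · group
end

section
/- Let 𝒟 be the family of all subsets X ⊆ ℚ of the form X = ⋃_{n ∈ ℤ} (x_{2n}, x_{2n+1}) ∩ ℚ, where (x_n)_{n ∈ ℤ} is a strictly increasing two-sided sequence of irrational real numbers with x_n → +∞ as n → +∞ and x_n → −∞ as n → −∞. For X ∈ 𝒟 let A(X) = {g ∈ Aut(ℚ,<) : g(q) = q for all q ∈ ℚ \ X}. Then every g ∈ Aut(ℚ,<) can be written as g = a·b with a ∈ A(X) and b ∈ A(Y) for some X, Y ∈ 𝒟; that is, Aut(ℚ,<) = ⋃_{X,Y ∈ 𝒟} A(X)·A(Y). -/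
open Filter

namespace TrussAux


/-- rationals in a real open interval -/
def Ioq (α β : ℝ) : Set ℚ := {q : ℚ | α < (q : ℝ) ∧ (q : ℝ) < β}

lemma Ioq.nonempty {α β : ℝ} (h : α < β) : (Ioq α β).Nonempty := by
  obtain ⟨q, h1, h2⟩ := exists_rat_btwn h
  exact ⟨q, h1, h2⟩

instance (α β : ℝ) : DenselyOrdered ↥(Ioq α β) := by
  constructor
  rintro ⟨x, hx1, hx2⟩ ⟨y, hy1, hy2⟩ hxy
  have hxy' : x < y := hxy
  refine ⟨⟨(x + y) / 2, ?_, ?_⟩, ?_, ?_⟩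
  · push_cast; linarith
  · push_cast; linarith
  · show x < (x + y) / 2; linarith
  · show (x + y) / 2 < y; linarith

instance (α β : ℝ) : NoMaxOrder ↥(Ioq α β) := by
  constructor
  rintro ⟨x, hx1, hx2⟩
  obtain ⟨r, hr1, hr2⟩ := exists_rat_btwn hx2
  exact ⟨⟨r, hx1.trans (by exact_mod_cast hr1), hr2⟩, by exact_mod_cast hr1⟩

instance (α β : ℝ) : NoMinOrder ↥(Ioq α β) := by
  constructor
  rintro ⟨x, hx1, hx2⟩
  obtain ⟨r, hr1, hr2⟩ := exists_rat_btwn hx1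
  exact ⟨⟨r, hr1, (by exact_mod_cast hr2 : (r:ℝ) < x).trans hx2⟩, by exact_mod_cast hr2⟩

lemma cantor {α β γ δ : ℝ} (h1 : α < β) (h2 : γ < δ) :
    Nonempty (↥(Ioq α β) ≃o ↥(Ioq γ δ)) := by
  have : Nonempty ↥(Ioq α β) := (Ioq.nonempty h1).to_subtype
  have : Nonempty ↥(Ioq γ δ) := (Ioq.nonempty h2).to_subtype
  exact Order.iso_of_countable_dense _ _

variable (g : ℚ ≃o ℚ)

/-- the canonical extension of `g` to `ℝ` (as a bare function via `sSup`) -/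
noncomputable def gHat (x : ℝ) : ℝ :=
  sSup {y : ℝ | ∃ q : ℚ, (q : ℝ) < x ∧ y = ((g q : ℚ) : ℝ)}

lemma gHat_set_nonempty (x : ℝ) :
    {y : ℝ | ∃ q : ℚ, (q : ℝ) < x ∧ y = ((g q : ℚ) : ℝ)}.Nonempty := by
  obtain ⟨q, hq⟩ := exists_rat_lt x
  exact ⟨g q, ⟨q, hq, rfl⟩⟩

lemma gHat_set_bdd (x : ℝ) :
    BddAbove {y : ℝ | ∃ q : ℚ, (q : ℝ) < x ∧ y = ((g q : ℚ) : ℝ)} := by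
  obtain ⟨t, ht⟩ := exists_rat_gt x
  refine ⟨((g t : ℚ) : ℝ), ?_⟩
  rintro y ⟨q, hq, rfl⟩
  have hqt : q ≤ t := by
    have : (q:ℝ) < t := hq.trans ht
    exact_mod_cast this.le
  exact_mod_cast g.le_iff_le.2 hqt

lemma lt_gHat (r : ℚ) (x : ℝ) : (r : ℝ) < gHat g x ↔ ((g.symm r : ℚ) : ℝ) < x := by
  constructor
  · intro h
    obtain ⟨y, ⟨q, hq, rfl⟩, hry⟩ := exists_lt_of_lt_csSup (gHat_set_nonempty g x) h
    have h1 : r < g q := by exact_mod_cast hry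
    have h2 : g.symm r < q := by
      have := g.symm.lt_iff_lt.2 h1
      simpa using this
    exact lt_trans (by exact_mod_cast h2) hq
  · intro h
    obtain ⟨s, hs1, hs2⟩ := exists_rat_btwn h
    have h1 : g.symm r < s := by exact_mod_cast hs1
    have h2 : r < g s := by
      have := g.lt_iff_lt.2 h1
      simpa using this
    have h3 : ((g s : ℚ) : ℝ) ≤ gHat g x :=
      le_csSup (gHat_set_bdd g x) ⟨s, hs2, rfl⟩
    exact lt_of_lt_of_le (by exact_mod_cast h2) h3

lemma gHat_lt (r : ℚ) {x : ℝ} (h : x < ((g.symm r : ℚ) : ℝ)) : gHat g x < r := by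
  obtain ⟨s, hs1, hs2⟩ := exists_rat_btwn h
  have h1 : s < g.symm r := by exact_mod_cast hs2
  have h2 : g s < r := by
    have := g.lt_iff_lt.2 h1
    simpa using this
  have h3 : gHat g x ≤ ((g s : ℚ) : ℝ) := by
    apply csSup_le (gHat_set_nonempty g x)
    rintro y ⟨q, hq, rfl⟩
    have hqs : q ≤ s := by
      have : (q:ℝ) < s := hq.trans hs1
      exact_mod_cast this.le
    exact_mod_cast g.le_iff_le.2 hqs
  exact lt_of_le_of_lt h3 (by exact_mod_cast h2)

lemma gHat_lt_iff (r : ℚ) {x : ℝ} (hx : Irrational x) :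
    gHat g x < (r : ℝ) ↔ x < ((g.symm r : ℚ) : ℝ) := by
  constructor
  · intro h
    rcases lt_or_gt_of_ne (hx.ne_rat (g.symm r)) with h' | h'
    · exact h'
    · exact absurd ((lt_gHat g r x).2 h') (lt_asymm h)
  · exact gHat_lt g r

lemma gHat_ne (q : ℚ) {x : ℝ} (hx : Irrational x) : (q : ℝ) ≠ gHat g x := by
  rcases lt_or_gt_of_ne (hx.ne_rat (g.symm q)) with h | h
  · exact (ne_of_gt (gHat_lt g q h))
  · exact ne_of_lt ((lt_gHat g q x).2 h)



/-- index lemma: every rational lies in a unique cell -/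
lemma exists_unique_cell (b : ℤ → ℝ) (hb : StrictMono b)
    (hbq : ∀ (k : ℤ) (q : ℚ), (q : ℝ) ≠ b k)
    (hbt : Tendsto b atTop atTop) (hbb : Tendsto b atBot atBot) (q : ℚ) :
    ∃ k : ℤ, q ∈ Ioq (b k) (b (k + 1)) ∧ ∀ l : ℤ, q ∈ Ioq (b l) (b (l + 1)) → l = k := by
  have h1 : ∃ k, b k < (q : ℝ) := by
    obtain ⟨k, hk⟩ := (hbb.eventually (eventually_lt_atBot ((q : ℝ)))).exists
    exact ⟨k, hk⟩
  have h2 : ∃ B : ℤ, ∀ k, b k < (q : ℝ) → k ≤ B := by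
    obtain ⟨B, hB⟩ := eventually_atTop.1 (hbt.eventually (eventually_gt_atTop ((q : ℝ))))
    refine ⟨B, fun k hk => ?_⟩
    by_contra h
    exact absurd (hB k (by omega)) (lt_asymm hk)
  obtain ⟨B, hB⟩ := h2
  obtain ⟨k, hk, hgr⟩ := Int.exists_greatest_of_bdd ⟨B, fun z hz => hB z hz⟩ h1
  have hk2 : (q : ℝ) < b (k + 1) := by
    rcases lt_or_ge (q : ℝ) (b (k + 1)) with h | h
    · exact h
    · have : b (k+1) < q := lt_of_le_of_ne h (hbq (k+1) q).symm
      exact absurd (hgr _ this) (by omega)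
  refine ⟨k, ⟨hk, hk2⟩, fun l hl => ?_⟩
  have h3 : l ≤ k := hgr l hl.1
  by_contra h
  have h4 : l + 1 ≤ k := by omega
  exact absurd (lt_of_le_of_lt (hb.monotone h4) hk) (lt_asymm hl.2)

theorem glue (c c' : ℤ → ℝ) (hc : StrictMono c) (hc' : StrictMono c')
    (hcq : ∀ (k : ℤ) (q : ℚ), (q : ℝ) ≠ c k) (hcq' : ∀ (k : ℤ) (q : ℚ), (q : ℝ) ≠ c' k)
    (hct : Tendsto c atTop atTop) (hcb : Tendsto c atBot atBot)
    (hct' : Tendsto c' atTop atTop) (hcb' : Tendsto c' atBot atBot)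
    (e : ∀ k : ℤ, ↥(Ioq (c k) (c (k + 1))) ≃o ↥(Ioq (c' k) (c' (k + 1)))) :
    ∃ F : ℚ ≃o ℚ,
      (∀ (k : ℤ) (q : ℚ) (h : q ∈ Ioq (c k) (c (k + 1))), F q = ↑(e k ⟨q, h⟩)) ∧
      (∀ q : ℚ, ∃ k : ℤ, q ∈ Ioq (c k) (c (k + 1))) := by
  have idxP := exists_unique_cell c hc hcq hct hcb
  have idxP' := exists_unique_cell c' hc' hcq' hct' hcb'
  set F : ℚ → ℚ := fun q => ↑(e (idxP q).choose ⟨q, (idxP q).choose_spec.1⟩) with hF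
  set G : ℚ → ℚ := fun q => ↑((e (idxP' q).choose).symm ⟨q, (idxP' q).choose_spec.1⟩) with hG
  have hFeq : ∀ (k : ℤ) (q : ℚ) (h : q ∈ Ioq (c k) (c (k + 1))), F q = ↑(e k ⟨q, h⟩) := by
    intro k q h
    have hk : k = (idxP q).choose := (idxP q).choose_spec.2 k h
    subst hk; rfl
  have hGeq : ∀ (k : ℤ) (q : ℚ) (h : q ∈ Ioq (c' k) (c' (k + 1))), G q = ↑((e k).symm ⟨q, h⟩) := by
    intro k q h
    have hk : k = (idxP' q).choose := (idxP' q).choose_spec.2 k h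
    subst hk; rfl
  have hFmem : ∀ (k : ℤ) (q : ℚ) (h : q ∈ Ioq (c k) (c (k + 1))),
      F q ∈ Ioq (c' k) (c' (k + 1)) := by
    intro k q h
    rw [hFeq k q h]
    exact (e k ⟨q, h⟩).2
  have hGmem : ∀ (k : ℤ) (q : ℚ) (h : q ∈ Ioq (c' k) (c' (k + 1))),
      G q ∈ Ioq (c k) (c (k + 1)) := by
    intro k q h
    rw [hGeq k q h]
    exact ((e k).symm ⟨q, h⟩).2
  have hGF : Function.LeftInverse G F := by
    intro q
    set k := (idxP q).choose with hk
    have h : q ∈ Ioq (c k) (c (k + 1)) := (idxP q).choose_spec.1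
    have h2 : F q ∈ Ioq (c' k) (c' (k + 1)) := hFmem k q h
    rw [hGeq k (F q) h2]
    have : (⟨F q, h2⟩ : ↥(Ioq (c' k) (c' (k + 1)))) = e k ⟨q, h⟩ :=
      Subtype.ext (hFeq k q h)
    rw [this, OrderIso.symm_apply_apply]
  have hFG : Function.RightInverse G F := by
    intro q
    set k := (idxP' q).choose with hk
    have h : q ∈ Ioq (c' k) (c' (k + 1)) := (idxP' q).choose_spec.1
    have h2 : G q ∈ Ioq (c k) (c (k + 1)) := hGmem k q h
    rw [hFeq k (G q) h2]
    have : (⟨G q, h2⟩ : ↥(Ioq (c k) (c (k + 1)))) = (e k).symm ⟨q, h⟩ :=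
      Subtype.ext (hGeq k q h)
    rw [this, OrderIso.apply_symm_apply]
  have hFmono : StrictMono F := by
    intro q r hqr
    set k := (idxP q).choose with hk
    set l := (idxP r).choose with hl
    have hq : q ∈ Ioq (c k) (c (k + 1)) := (idxP q).choose_spec.1
    have hr : r ∈ Ioq (c l) (c (l + 1)) := (idxP r).choose_spec.1
    have hkl : k ≤ l := by
      by_contra hcon
      have h4 : l + 1 ≤ k := by omega
      have : (r : ℝ) < (q : ℝ) :=
        lt_of_lt_of_le hr.2 (le_trans (hc.monotone h4) hq.1.le)
      exact absurd hqr (not_lt.2 (by exact_mod_cast this.le))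
    rcases eq_or_lt_of_le hkl with heq | hlt
    · rw [← heq] at hr
      have hlt2 : (⟨q, hq⟩ : ↥(Ioq (c k) (c (k + 1)))) < ⟨r, hr⟩ := Subtype.mk_lt_mk.2 hqr
      have h5 := (e k).lt_iff_lt.2 hlt2
      rw [hFeq k q hq, hFeq k r hr]
      exact_mod_cast h5
    · have h1 : (F q : ℝ) < c' (k + 1) := (hFmem k q hq).2
      have h2 : c' l < (F r : ℝ) := (hFmem l r hr).1
      have h3 : c' (k + 1) ≤ c' l := hc'.monotone (by omega)
      exact_mod_cast h1.trans_le (h3.trans h2.le)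
  refine ⟨{ toFun := F, invFun := G, left_inv := hGF, right_inv := hFG,
            map_rel_iff' := by intro a b; exact hFmono.le_iff_le }, hFeq,
          fun q => ⟨(idxP q).choose, (idxP q).choose_spec.1⟩⟩



/-- the "required lower bound for the next point" function -/
noncomputable def Bnd (k : ℤ) (x : ℝ) : ℝ :=
  max (x + 1)
    (if k % 4 = 0 then ((g.symm (⌈x⌉ + 1) : ℚ) : ℝ)
     else if k % 4 = 2 then ((g (⌈x⌉ + 1) : ℚ) : ℝ) else x)

lemma exists_down (k : ℤ) (c : ℝ) : ∃ y : ℝ, Irrational y ∧ y < c ∧ Bnd g k y < c := by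
  obtain ⟨w, hw⟩ := exists_rat_lt c
  set M : ℝ := min (c - 1) (min ((g w : ℚ) : ℝ) ((g.symm w : ℚ) : ℝ) - 2) with hM
  obtain ⟨y, hy, hy1, hy2⟩ := exists_irrational_btwn (sub_one_lt M)
  have hyc1 : y + 1 < c := by
    have : y < c - 1 := hy2.trans_le (min_le_left _ _)
    linarith
  have hyc : y < c := by linarith
  have hceil : (⌈y⌉ : ℝ) < y + 1 := Int.ceil_lt_add_one y
  have hbranch : (if k % 4 = 0 then ((g.symm (⌈y⌉ + 1) : ℚ) : ℝ)
      else if k % 4 = 2 then ((g (⌈y⌉ + 1) : ℚ) : ℝ) else y) < c := by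
    have hkey : y + 2 < min ((g w : ℚ) : ℝ) ((g.symm w : ℚ) : ℝ) := by
      have : y < min ((g w : ℚ) : ℝ) ((g.symm w : ℚ) : ℝ) - 2 :=
        hy2.trans_le (min_le_right _ _)
      linarith
    split_ifs with h0 h2
    · -- need g.symm (⌈y⌉+1) ≤ w < c
      have h1 : ((⌈y⌉ + 1 : ℚ) : ℝ) < ((g w : ℚ) : ℝ) := by
        push_cast
        have := hkey.trans_le (min_le_left _ _)
        linarith
      have h2 : (⌈y⌉ + 1 : ℚ) ≤ g w := by exact_mod_cast h1.le
      have h3 : g.symm (⌈y⌉ + 1) ≤ w := by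
        have := g.symm.le_iff_le.2 h2
        simpa using this
      exact lt_of_le_of_lt (by exact_mod_cast h3) hw
    · have h1 : ((⌈y⌉ + 1 : ℚ) : ℝ) < ((g.symm w : ℚ) : ℝ) := by
        push_cast
        have := hkey.trans_le (min_le_right _ _)
        linarith
      have h2 : (⌈y⌉ + 1 : ℚ) ≤ g.symm w := by exact_mod_cast h1.le
      have h3 : g (⌈y⌉ + 1) ≤ w := by
        have := g.le_iff_le.2 h2
        simpa using this
      exact lt_of_le_of_lt (by exact_mod_cast h3) hw
    · exact hyc
  exact ⟨y, hy, hyc, max_lt hyc1 hbranch⟩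

lemma exists_up (k : ℤ) (x : ℝ) : ∃ y : ℝ, Irrational y ∧ Bnd g k x < y :=
  (exists_irrational_btwn (lt_add_one (Bnd g k x))).imp fun y ⟨h1, h2, _⟩ => ⟨h1, h2⟩

lemma exists_seq : ∃ d : ℤ → ℝ, (∀ k, Irrational (d k)) ∧
    (∀ k, d k + 1 < d (k + 1)) ∧
    (∀ k, k % 4 = 0 → ((g.symm (⌈d k⌉ + 1) : ℚ) : ℝ) < d (k + 1)) ∧
    (∀ k, k % 4 = 2 → ((g (⌈d k⌉ + 1) : ℚ) : ℝ) < d (k + 1)) := by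
  set u : ℕ → ℝ := fun n =>
    Nat.rec (Real.sqrt 2) (fun n x => (exists_up g n x).choose) n with hu
  set v : ℕ → ℝ := fun n =>
    Nat.rec (Real.sqrt 2) (fun n x => (exists_down g (-(n + 1 : ℕ) : ℤ) x).choose) n with hv
  have hu0 : u 0 = Real.sqrt 2 := rfl
  have huS : ∀ n : ℕ, u (n + 1) = (exists_up g n (u n)).choose := fun n => rfl
  have hv0 : v 0 = Real.sqrt 2 := rfl
  have hvS : ∀ n : ℕ, v (n + 1) = (exists_down g (-(n + 1 : ℕ) : ℤ) (v n)).choose := fun n => rfl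
  have huIrr : ∀ n, Irrational (u n) := by
    intro n
    cases n with
    | zero => exact irrational_sqrt_two
    | succ n => rw [huS]; exact (exists_up g n (u n)).choose_spec.1
  have hvIrr : ∀ n, Irrational (v n) := by
    intro n
    cases n with
    | zero => exact irrational_sqrt_two
    | succ n => rw [hvS]; exact (exists_down g _ (v n)).choose_spec.1
  have huB : ∀ n : ℕ, Bnd g n (u n) < u (n + 1) := by
    intro n; rw [huS]; exact (exists_up g n (u n)).choose_spec.2
  have hvB : ∀ n : ℕ, Bnd g (-(n + 1 : ℕ) : ℤ) (v (n + 1)) < v n := by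
    intro n; rw [hvS]; exact (exists_down g _ (v n)).choose_spec.2.2
  set d : ℤ → ℝ := fun k => if 0 ≤ k then u k.toNat else v (-k).toNat with hd
  have hdIrr : ∀ k, Irrational (d k) := by
    intro k
    by_cases h : 0 ≤ k
    · simp only [hd, if_pos h]; exact huIrr _
    · simp only [hd, if_neg h]; exact hvIrr _
  have hdB : ∀ k : ℤ, Bnd g k (d k) < d (k + 1) := by
    intro k
    rcases le_or_gt 0 k with h | h
    · have h1 : (0:ℤ) ≤ k + 1 := by omega
      simp only [hd, if_pos h, if_pos h1]
      have h2 : (k + 1).toNat = k.toNat + 1 := by omega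
      rw [h2]
      have := huB k.toNat
      rwa [show ((k.toNat : ℕ) : ℤ) = k by omega] at this
    · have h1 : ¬ (0:ℤ) ≤ k := by omega
      simp only [hd, if_neg h1]
      have hn : (-k).toNat = ((-k).toNat - 1) + 1 := by omega
      rcases eq_or_lt_of_le (show k ≤ -1 by omega) with heq | hlt
      · -- k = -1 : d (k+1) = d 0 = u 0 = v 0
        subst heq
        have := hvB 0
        have e1 : ((-(-1) : ℤ)).toNat = 1 := by norm_num
        rw [show ((-1 : ℤ) + 1) = 0 by norm_num, if_pos le_rfl, e1]
        simpa [hu0, hv0] using this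
      · have h2 : ¬ (0:ℤ) ≤ k + 1 := by omega
        rw [if_neg h2]
        set n : ℕ := (-(k+1)).toNat with hn2
        have e1 : (-k).toNat = n + 1 := by omega
        rw [e1]
        have := hvB n
        rwa [show (-((n : ℕ) + 1 : ℕ) : ℤ) = k by omega] at this
  have key : ∀ (k : ℤ) (x : ℝ),
      (x + 1 ≤ Bnd g k x) ∧
      (k % 4 = 0 → ((g.symm (⌈x⌉ + 1) : ℚ) : ℝ) ≤ Bnd g k x) ∧
      (k % 4 = 2 → ((g (⌈x⌉ + 1) : ℚ) : ℝ) ≤ Bnd g k x) := by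
    intro k x
    refine ⟨le_max_left _ _, fun h0 => ?_, fun h2 => ?_⟩
    · refine le_trans ?_ (le_max_right _ _)
      rw [if_pos h0]
    · refine le_trans ?_ (le_max_right _ _)
      rw [if_neg (by omega), if_pos h2]
  exact ⟨d, hdIrr,
    fun k => lt_of_le_of_lt (key k (d k)).1 (hdB k),
    fun k h => lt_of_le_of_lt ((key k (d k)).2.1 h) (hdB k),
    fun k h => lt_of_le_of_lt ((key k (d k)).2.2 h) (hdB k)⟩


end TrussAux

open Filter TrussAux



/-- `X ⊆ ℚ` belongs to the family `𝒟` if it is the trace on `ℚ` of a two-sided union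
`⋃_{n ∈ ℤ} (x_{2n}, x_{2n+1})` of open intervals with irrational endpoints, where
`(x_n)_{n ∈ ℤ}` is strictly increasing and tends to `±∞` as `n → ±∞`. -/
def MemD (X : Set ℚ) : Prop :=
  ∃ x : ℤ → ℝ, (∀ n : ℤ, Irrational (x n)) ∧ StrictMono x ∧
    Filter.Tendsto x Filter.atTop Filter.atTop ∧
    Filter.Tendsto x Filter.atBot Filter.atBot ∧
    X = ⋃ n : ℤ, {q : ℚ | x (2 * n) < (q : ℝ) ∧ (q : ℝ) < x (2 * n + 1)}

/-- For `X ⊆ ℚ`, `A(X)` is the set of order-automorphisms of `ℚ` supported in `X`. -/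
def A (X : Set ℚ) : Set (ℚ ≃o ℚ) := {g : ℚ ≃o ℚ | ∀ q : ℚ, q ∉ X → g q = q}

/-- Truss' lemma: `Aut(ℚ,<) = ⋃_{X,Y ∈ 𝒟} A(X)·A(Y)`. -/
theorem autQ_eq_union_AX_AY (g : ℚ ≃o ℚ) :
    ∃ X Y : Set ℚ, MemD X ∧ MemD Y ∧
      ∃ a ∈ A X, ∃ b ∈ A Y, g = a * b := by
  obtain ⟨d, hdIrr, hdgap, hd0, hd2⟩ := TrussAux.exists_seq g
  have hdlt : ∀ k, d k < d (k + 1) := fun k => by linarith [hdgap k]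
  have hdmono : StrictMono d := strictMono_int_of_lt_succ hdlt
  have hdne : ∀ (k : ℤ) (q : ℚ), (q : ℝ) ≠ d k := fun k q => ((hdIrr k).ne_rat q).symm
  -- growth bounds and tendsto of d
  have hup : ∀ k : ℤ, 0 ≤ k → d 0 + k ≤ d k := by
    intro k hk
    refine Int.le_induction (motive := fun k _ => d 0 + (k : ℝ) ≤ d k) ?_ ?_ k hk
    · simp
    · intro n _ ih
      have := hdgap n
      push_cast
      push_cast at ih
      linarith
  have hdownb : ∀ k : ℤ, k ≤ 0 → d k ≤ d 0 + k := by
    intro k hk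
    refine Int.le_induction_down (motive := fun k _ => d k ≤ d 0 + (k : ℝ)) ?_ ?_ k hk
    · simp
    · intro n _ ih
      have := hdgap (n - 1)
      rw [sub_add_cancel] at this
      push_cast
      push_cast at ih
      linarith
  have hcastZ : Tendsto (fun k : ℤ => (k : ℝ)) atTop atTop := tendsto_intCast_atTop_atTop
  have hcastZb : Tendsto (fun k : ℤ => (k : ℝ)) atBot atBot := by
    rw [show (fun k : ℤ => (k : ℝ)) = (fun x : ℝ => -x) ∘ (fun k : ℤ => ((-k : ℤ) : ℝ)) by
      funext k; simp]
    exact tendsto_neg_atTop_atBot.comp (hcastZ.comp tendsto_neg_atBot_atTop)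
  have hdt : Tendsto d atTop atTop := by
    apply tendsto_atTop_mono' atTop ?_ (tendsto_atTop_add_const_left atTop (d 0) hcastZ)
    filter_upwards [eventually_ge_atTop (0 : ℤ)] with k hk using hup k hk
  have hdb : Tendsto d atBot atBot := by
    apply tendsto_atBot_mono' atBot ?_ (tendsto_atBot_add_const_left atBot (d 0) hcastZb)
    filter_upwards [eventually_le_atBot (0 : ℤ)] with k hk using hdownb k hk
  -- shifted tendsto helper
  have hshift : ∀ m : ℤ, Tendsto (fun k : ℤ => d (k + m)) atTop atTop := fun m =>
    hdt.comp (tendsto_atTop_atTop.mpr fun b => ⟨b - m, fun a ha => by omega⟩)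
  have hshiftb : ∀ m : ℤ, Tendsto (fun k : ℤ => d (k + m)) atBot atBot := fun m =>
    hdb.comp (tendsto_atBot_atBot.mpr fun b => ⟨b - m, fun a ha => by omega⟩)
  -- the codomain cut sequence
  set c' : ℤ → ℝ := fun k => if k % 4 = 1 ∨ k % 4 = 2 then gHat g (d k) else d k with hc'def
  have hc'0 : ∀ k, k % 4 = 0 → c' k = d k := fun k h => if_neg (by omega)
  have hc'3 : ∀ k, k % 4 = 3 → c' k = d k := fun k h => if_neg (by omega)
  have hc'1 : ∀ k, k % 4 = 1 → c' k = gHat g (d k) := fun k h => if_pos (Or.inl h)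
  have hc'2 : ∀ k, k % 4 = 2 → c' k = gHat g (d k) := fun k h => if_pos (Or.inr h)
  have hceil : ∀ k : ℤ, d k < (((⌈d k⌉ + 1 : ℚ)) : ℝ) := by
    intro k
    push_cast
    linarith [Int.le_ceil (d k)]
  have hc'lt : ∀ k, c' k < c' (k + 1) := by
    intro k
    have hmod : k % 4 = 0 ∨ k % 4 = 1 ∨ k % 4 = 2 ∨ k % 4 = 3 := by omega
    rcases hmod with h | h | h | h
    · rw [hc'0 k h, hc'1 (k + 1) (by omega)]
      exact (hceil k).trans ((lt_gHat g (⌈d k⌉ + 1 : ℚ) (d (k + 1))).2 (hd0 k h))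
    · rw [hc'1 k h, hc'2 (k + 1) (by omega)]
      obtain ⟨r, hr1, hr2⟩ := exists_rat_btwn (hdlt k)
      have e1 : gHat g (d k) < ((g r : ℚ) : ℝ) := gHat_lt g (g r) (by simpa using hr1)
      have e2 : ((g r : ℚ) : ℝ) < gHat g (d (k + 1)) :=
        (lt_gHat g (g r) (d (k + 1))).2 (by simpa using hr2)
      exact e1.trans e2
    · rw [hc'2 k h, hc'3 (k + 1) (by omega)]
      exact (gHat_lt g (g (⌈d k⌉ + 1)) (by simpa using hceil k)).trans (hd2 k h)
    · rw [hc'3 k h, hc'0 (k + 1) (by omega)]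
      exact hdlt k
  have hc'mono : StrictMono c' := strictMono_int_of_lt_succ hc'lt
  have hc'ne : ∀ (k : ℤ) (q : ℚ), (q : ℝ) ≠ c' k := by
    intro k q
    by_cases h : k % 4 = 1 ∨ k % 4 = 2
    · rw [hc'def]; simp only [if_pos h]; exact gHat_ne g q (hdIrr k)
    · rw [hc'def]; simp only [if_neg h]; exact hdne k q
  have hc'le : ∀ k : ℤ, c' k ≤ d (k + 2) ∧ d (k + (-2)) ≤ c' k := by
    intro k
    have hmod : k % 4 = 0 ∨ k % 4 = 1 ∨ k % 4 = 2 ∨ k % 4 = 3 := by omega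
    constructor
    · rcases hmod with h | h | h | h
      · rw [hc'0 k h]; exact hdmono.monotone (by omega)
      · calc c' k ≤ c' (k + 2) := (hc'mono (by omega)).le
          _ = d (k + 2) := hc'3 _ (by omega)
      · calc c' k ≤ c' (k + 1) := (hc'mono (by omega)).le
          _ = d (k + 1) := hc'3 _ (by omega)
          _ ≤ d (k + 2) := hdmono.monotone (by omega)
      · rw [hc'3 k h]; exact hdmono.monotone (by omega)
    · rcases hmod with h | h | h | h
      · rw [hc'0 k h]; exact hdmono.monotone (by omega)
      · calc d (k + (-2)) ≤ d (k + (-1)) := hdmono.monotone (by omega)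
          _ = c' (k + (-1)) := (hc'0 _ (by omega)).symm
          _ ≤ c' k := (hc'mono (by omega)).le
      · calc d (k + (-2)) = c' (k + (-2)) := (hc'0 _ (by omega)).symm
          _ ≤ c' k := (hc'mono (by omega)).le
      · rw [hc'3 k h]; exact hdmono.monotone (by omega)
  have hc't : Tendsto c' atTop atTop :=
    tendsto_atTop_mono (fun k => (hc'le k).2) (hshift (-2))
  have hc'b : Tendsto c' atBot atBot :=
    tendsto_atBot_mono (fun k => (hc'le k).1) (hshiftb 2)
  -- the cellwise isomorphisms
  have hE : ∀ k : ℤ, ∃ E : ↥(Ioq (d k) (d (k + 1))) ≃o ↥(Ioq (c' k) (c' (k + 1))),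
      (k % 4 = 1 → ∀ x, ((E x : ℚ)) = g ↑x) ∧ (k % 4 = 3 → ∀ x, ((E x : ℚ)) = ↑x) := by
    intro k
    by_cases h1 : k % 4 = 1
    · have e0 : c' k = gHat g (d k) := hc'1 k h1
      have e1 : c' (k + 1) = gHat g (d (k + 1)) := hc'2 (k + 1) (by omega)
      have mem1 : ∀ x : ↥(Ioq (d k) (d (k + 1))), (g ↑x : ℚ) ∈ Ioq (c' k) (c' (k + 1)) := by
        rintro ⟨x, hx1, hx2⟩
        refine ⟨?_, ?_⟩
        · rw [e0]; exact gHat_lt g (g x) (by simpa using hx1)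
        · rw [e1]; exact (lt_gHat g (g x) (d (k + 1))).2 (by simpa using hx2)
      have mem2 : ∀ y : ↥(Ioq (c' k) (c' (k + 1))),
          (g.symm ↑y : ℚ) ∈ Ioq (d k) (d (k + 1)) := by
        rintro ⟨y, hy1, hy2⟩
        rw [e0] at hy1
        rw [e1] at hy2
        exact ⟨(gHat_lt_iff g y (hdIrr k)).1 hy1, (lt_gHat g y (d (k + 1))).1 hy2⟩
      refine ⟨{ toFun := fun x => ⟨g ↑x, mem1 x⟩,
                invFun := fun y => ⟨g.symm ↑y, mem2 y⟩,
                left_inv := fun x => Subtype.ext (by simp),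
                right_inv := fun y => Subtype.ext (by simp),
                map_rel_iff' := ?_ }, fun _ x => rfl, fun h3 => absurd h1 (by omega)⟩
      intro x y
      simp [Subtype.mk_le_mk, ← Subtype.coe_le_coe]
    · by_cases h3 : k % 4 = 3
      · have e0 : c' k = d k := hc'3 k h3
        have e1 : c' (k + 1) = d (k + 1) := hc'0 (k + 1) (by omega)
        exact ⟨OrderIso.setCongr _ _ (by rw [e0, e1]),
          fun h => absurd h h1, fun _ x => rfl⟩
      · obtain ⟨E⟩ := cantor (hdlt k) (hc'lt k)
        exact ⟨E, fun h => absurd h h1, fun h => absurd h h3⟩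
  choose E hE1 hE3 using hE
  obtain ⟨F, hFeq, hFcell⟩ := glue d c' hdmono hc'mono hdne hc'ne hdt hdb hc't hc'b E
  -- the endpoint sequences for X and Y
  set xseq : ℤ → ℝ := fun j => if Even j then d (2 * j) else d (2 * j + 1) with hxseq
  set yseq : ℤ → ℝ := fun j => if Even j then d (2 * j + 2) else d (2 * j + 3) with hyseq
  have hxeven : ∀ j : ℤ, Even j → xseq j = d (2 * j) := fun j h => if_pos h
  have hxodd : ∀ j : ℤ, ¬Even j → xseq j = d (2 * j + 1) := fun j h => if_neg h
  have hyeven : ∀ j : ℤ, Even j → yseq j = d (2 * j + 2) := fun j h => if_pos h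
  have hyodd : ∀ j : ℤ, ¬Even j → yseq j = d (2 * j + 3) := fun j h => if_neg h
  have hev2 : ∀ n : ℤ, Even (2 * n) := fun n => ⟨n, by ring⟩
  have hnev2 : ∀ n : ℤ, ¬Even (2 * n + 1) := by
    rintro n ⟨r, hr⟩; omega
  have hx2n : ∀ n : ℤ, xseq (2 * n) = d (4 * n) := by
    intro n; rw [hxeven _ (hev2 n)]; congr 1; ring
  have hx2n1 : ∀ n : ℤ, xseq (2 * n + 1) = d (4 * n + 3) := by
    intro n; rw [hxodd _ (hnev2 n)]; congr 1; ring
  have hy2n : ∀ n : ℤ, yseq (2 * n) = d (4 * n + 2) := by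
    intro n; rw [hyeven _ (hev2 n)]; congr 1; ring
  have hy2n1 : ∀ n : ℤ, yseq (2 * n + 1) = d (4 * n + 5) := by
    intro n; rw [hyodd _ (hnev2 n)]; congr 1; ring
  -- properties of xseq, yseq
  have hxIrr : ∀ j, Irrational (xseq j) := by
    intro j
    by_cases h : Even j
    · rw [hxeven j h]; exact hdIrr _
    · rw [hxodd j h]; exact hdIrr _
  have hyIrr : ∀ j, Irrational (yseq j) := by
    intro j
    by_cases h : Even j
    · rw [hyeven j h]; exact hdIrr _
    · rw [hyodd j h]; exact hdIrr _
  have hxmono : StrictMono xseq := by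
    apply strictMono_int_of_lt_succ
    intro j
    by_cases h : Even j
    · rw [hxeven j h, hxodd (j + 1) (by simpa [Int.even_add_one] using h)]
      exact hdmono (by omega)
    · rw [hxodd j h, hxeven (j + 1) (by simpa [Int.even_add_one] using h)]
      exact hdmono (by omega)
  have hymono : StrictMono yseq := by
    apply strictMono_int_of_lt_succ
    intro j
    by_cases h : Even j
    · rw [hyeven j h, hyodd (j + 1) (by simpa [Int.even_add_one] using h)]
      exact hdmono (by omega)
    · rw [hyodd j h, hyeven (j + 1) (by simpa [Int.even_add_one] using h)]
      exact hdmono (by omega)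
  have hxlow : ∀ j : ℤ, d (j + j) ≤ xseq j := by
    intro j
    by_cases h : Even j
    · rw [hxeven j h]; exact hdmono.monotone (by omega)
    · rw [hxodd j h]; exact hdmono.monotone (by omega)
  have hxhigh : ∀ j : ℤ, xseq j ≤ d (j + j + 1) := by
    intro j
    by_cases h : Even j
    · rw [hxeven j h]; exact hdmono.monotone (by omega)
    · rw [hxodd j h]; exact hdmono.monotone (by omega)
  have hylow : ∀ j : ℤ, d (j + j) ≤ yseq j := by
    intro j
    by_cases h : Even j
    · rw [hyeven j h]; exact hdmono.monotone (by omega)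
    · rw [hyodd j h]; exact hdmono.monotone (by omega)
  have hyhigh : ∀ j : ℤ, yseq j ≤ d (j + j + 3) := by
    intro j
    by_cases h : Even j
    · rw [hyeven j h]; exact hdmono.monotone (by omega)
    · rw [hyodd j h]; exact hdmono.monotone (by omega)
  have hdbl : Tendsto (fun j : ℤ => d (j + j)) atTop atTop :=
    hdt.comp (tendsto_atTop_atTop.mpr fun b => ⟨b.natAbs, fun a ha => by omega⟩)
  have hdbl1 : Tendsto (fun j : ℤ => d (j + j + 1)) atBot atBot :=
    hdb.comp (tendsto_atBot_atBot.mpr fun b => ⟨-b.natAbs - 1, fun a ha => by omega⟩)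
  have hdbl3 : Tendsto (fun j : ℤ => d (j + j + 3)) atBot atBot :=
    hdb.comp (tendsto_atBot_atBot.mpr fun b => ⟨-b.natAbs - 3, fun a ha => by omega⟩)
  have hxt : Tendsto xseq atTop atTop := tendsto_atTop_mono hxlow hdbl
  have hxb : Tendsto xseq atBot atBot := tendsto_atBot_mono hxhigh hdbl1
  have hyt : Tendsto yseq atTop atTop := tendsto_atTop_mono hylow hdbl
  have hyb : Tendsto yseq atBot atBot := tendsto_atBot_mono hyhigh hdbl3
  refine ⟨⋃ n : ℤ, {q : ℚ | xseq (2 * n) < (q : ℝ) ∧ (q : ℝ) < xseq (2 * n + 1)},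
          ⋃ n : ℤ, {q : ℚ | yseq (2 * n) < (q : ℝ) ∧ (q : ℝ) < yseq (2 * n + 1)},
          ⟨xseq, hxIrr, hxmono, hxt, hxb, rfl⟩,
          ⟨yseq, hyIrr, hymono, hyt, hyb, rfl⟩,
          F, ?_, F⁻¹ * g, ?_, (mul_inv_cancel_left F g).symm⟩
  · -- F ∈ A X
    intro q hq
    obtain ⟨k, hk⟩ := hFcell q
    by_cases h3 : k % 4 = 3
    · rw [hFeq k q hk]
      exact hE3 k h3 ⟨q, hk⟩
    · exfalso
      apply hq
      refine Set.mem_iUnion.2 ⟨k / 4, ?_, ?_⟩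
      · rw [hx2n]
        exact lt_of_le_of_lt (hdmono.monotone (by omega)) hk.1
      · rw [hx2n1]
        exact lt_of_lt_of_le hk.2 (hdmono.monotone (by omega))
  · -- F⁻¹ * g ∈ A Y
    intro q hq
    obtain ⟨k, hk⟩ := hFcell q
    have h1 : k % 4 = 1 := by
      by_contra h1
      apply hq
      have hmod : k % 4 = 0 ∨ k % 4 = 2 ∨ k % 4 = 3 := by omega
      rcases hmod with h | h | h
      · refine Set.mem_iUnion.2 ⟨k / 4 - 1, ?_, ?_⟩
        · rw [hy2n]
          exact lt_of_le_of_lt (hdmono.monotone (by omega)) hk.1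
        · rw [hy2n1]
          exact lt_of_lt_of_le hk.2 (hdmono.monotone (by omega))
      · refine Set.mem_iUnion.2 ⟨k / 4, ?_, ?_⟩
        · rw [hy2n]
          exact lt_of_le_of_lt (hdmono.monotone (by omega)) hk.1
        · rw [hy2n1]
          exact lt_of_lt_of_le hk.2 (hdmono.monotone (by omega))
      · refine Set.mem_iUnion.2 ⟨k / 4, ?_, ?_⟩
        · rw [hy2n]
          exact lt_of_le_of_lt (hdmono.monotone (by omega)) hk.1
        · rw [hy2n1]
          exact lt_of_lt_of_le hk.2 (hdmono.monotone (by omega))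
    have hFg : F q = g q := by
      rw [hFeq k q hk]
      exact hE1 k h1 ⟨q, hk⟩
    show F.symm (g q) = q
    rw [← hFg, OrderIso.symm_apply_apply]
end
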